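/- arXiv:1801.06235 — 12 statements merged into one kernel-verified Lean document; each statement's English description precedes it below -/
import Mathlib

section
/- If X is a real normed space whose Hamel dimension over ℝ is countably infinite, then there exists a sequence (x_n)_{n∈ℕ} in X with ∑_{n=1}^∞ ‖x_n‖ < ∞ whose sequence of partial sums does not converge in X; in particular, X is not complete. -/
open Filter Topology

theorem not_completeSpace_of_rank_aleph0 (X : Type*) [NormedAddCommGroup X]
    [NormedSpace ℝ X] (h : Module.rank ℝ X = Cardinal.aleph0) : ¬ CompleteSpace X := by
  intro hc
  -- get a basis indexed by ℕ
  obtain ⟨⟨ι, b⟩⟩ := Module.Free.exists_basis (R := ℝ) (M := X)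
  have hb : Cardinal.mk ι = Cardinal.aleph0 := by
    rw [← h]; exact b.mk_eq_rank''
  have h1 : Countable ι := Cardinal.mk_le_aleph0_iff.1 hb.le
  have h2 : Infinite ι := Cardinal.infinite_iff.2 hb.ge
  obtain ⟨e⟩ : Nonempty (ι ≃ ℕ) := nonempty_equiv_of_countable
  let c : Module.Basis ℕ ℝ X := b.reindex e
  set F : ℕ → Submodule ℝ X := fun n => Submodule.span ℝ (c '' (Set.Iio n)) with hF
  have hclosed : ∀ n, IsClosed (F n : Set X) := by
    intro n
    have : FiniteDimensional ℝ (F n) := by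
      apply FiniteDimensional.span_of_finite
      exact (Set.finite_Iio n).image c
    exact Submodule.closed_of_finiteDimensional _
  have hunion : (⋃ n, (F n : Set X)) = Set.univ := by
    ext x
    simp only [Set.mem_iUnion, Set.mem_univ, iff_true]
    have hx := c.mem_span_repr_support x
    rcases (c.repr x).support.bddAbove with ⟨m, hm⟩
    refine ⟨m + 1, Submodule.span_mono ?_ hx⟩
    intro y hy
    obtain ⟨i, hi, rfl⟩ := hy
    exact ⟨i, Nat.lt_succ_of_le (hm hi), rfl⟩
  obtain ⟨n, hn⟩ := nonempty_interior_of_iUnion_of_closed hclosed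
    hunion
  have htop : F n = ⊤ := Submodule.eq_top_of_nonempty_interior' _ hn
  have : FiniteDimensional ℝ X := by
    have : FiniteDimensional ℝ (F n) := by
      apply FiniteDimensional.span_of_finite
      exact (Set.finite_Iio n).image c
    rw [htop] at this
    exact (Submodule.topEquiv).finiteDimensional
  have := Module.rank_lt_aleph0 ℝ X
  rw [h] at this
  exact lt_irrefl _ this

/-- If `X` is a real normed space whose Hamel dimension over `ℝ` is countably infinite,
then there exists an absolutely convergent series in `X` which does not converge; in
particular `X` is not complete. -/
theorem stmt2 (X : Type*) [NormedAddCommGroup X] [NormedSpace ℝ X]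
    (h : Module.rank ℝ X = Cardinal.aleph0) :
    (∃ x : ℕ → X, (Summable fun n => ‖x n‖) ∧
      ¬ ∃ l : X, Tendsto (fun m => ∑ n ∈ Finset.range m, x n) atTop (𝓝 l)) ∧
    ¬ CompleteSpace X := by
  have hnc := not_completeSpace_of_rank_aleph0 X h
  refine ⟨?_, hnc⟩
  by_contra hx
  push_neg at hx
  exact hnc (NormedAddCommGroup.completeSpace_of_summable_imp_tendsto
    (fun u hu => hx u hu))
end

section
/- Let X be a Hausdorff, first-countable, locally convex topological vector space over ℝ such that every nonempty closed, von Neumann bounded, convex subset of X has an extreme point. Then the Hamel dimension of X over ℝ is not countably infinite. -/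
open Filter Topology Pointwise

section Aux
variable {X : Type*} [AddCommGroup X] [Module ℝ X] [TopologicalSpace X]

noncomputable def ww (f : ℕ → (X →L[ℝ] ℝ)) (e : ℕ → X) : ℕ → X
  | n => e n - ∑ k : Fin n, f k (e n) • ww f e k
termination_by n => n
decreasing_by exact k.isLt

lemma ww_spec (f : ℕ → (X →L[ℝ] ℝ)) (e : ℕ → X) (n : ℕ) :
    ww f e n = e n - ∑ k : Fin n, f k (e n) • ww f e k := by
  rw [ww]

lemma ww_mem_span (f : ℕ → (X →L[ℝ] ℝ)) (e : ℕ → X) (n : ℕ) :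
    ww f e n ∈ Submodule.span ℝ (e '' Set.Iic n) := by
  induction n using Nat.strong_induction_on with
  | _ n ih =>
    rw [ww_spec]
    refine sub_mem (Submodule.subset_span ⟨n, Set.self_mem_Iic, rfl⟩) ?_
    refine Submodule.sum_mem _ fun k _ => Submodule.smul_mem _ _ ?_
    exact Submodule.span_mono (Set.image_mono (Set.Iic_subset_Iic.2 k.isLt.le)) (ih k k.isLt)

variable {f : ℕ → (X →L[ℝ] ℝ)} {e : ℕ → X}

lemma f_ww_of_lt (hf0 : ∀ n, ∀ y ∈ Submodule.span ℝ (e '' Set.Iio n), f n y = 0)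
    {k j : ℕ} (hkj : k < j) : f j (ww f e k) = 0 := by
  refine hf0 j _ (Submodule.span_mono (Set.image_mono ?_) (ww_mem_span f e k))
  exact fun i hi => lt_of_le_of_lt hi hkj

lemma f_ww (hf1 : ∀ n, f n (e n) = 1)
    (hf0 : ∀ n, ∀ y ∈ Submodule.span ℝ (e '' Set.Iio n), f n y = 0)
    (k j : ℕ) : f j (ww f e k) = if j = k then 1 else 0 := by
  induction k using Nat.strong_induction_on with
  | _ k ih =>
    rcases lt_trichotomy k j with hkj | rfl | hjk
    · rw [f_ww_of_lt hf0 hkj, if_neg (Nat.ne_of_gt hkj)]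
    · rw [ww_spec, map_sub, map_sum, if_pos rfl]
      have : ∀ i : Fin k, f k (f i (e k) • ww f e i) = 0 := by
        intro i
        rw [map_smul, f_ww_of_lt hf0 i.isLt, smul_zero]
      rw [Finset.sum_congr rfl fun i _ => this i, Finset.sum_const_zero, hf1 k, sub_zero]
    · rw [if_neg (Nat.ne_of_lt hjk), ww_spec, map_sub, map_sum]
      have : ∀ i : Fin k, f j (f i (e k) • ww f e i) = if j = (i:ℕ) then f j (e k) else 0 := by
        intro i
        rw [map_smul, ih i i.isLt, smul_eq_mul]
        split <;> simp_all
      rw [Finset.sum_congr rfl fun i _ => this i]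
      rw [Fin.sum_univ_eq_sum_range (fun i => if j = i then f j (e k) else 0)]
      rw [Finset.sum_ite_eq, if_pos (Finset.mem_range.2 hjk), sub_self]

lemma linearIndependent_ww (hf1 : ∀ n, f n (e n) = 1)
    (hf0 : ∀ n, ∀ y ∈ Submodule.span ℝ (e '' Set.Iio n), f n y = 0) :
    LinearIndependent ℝ (ww f e) := by
  rw [linearIndependent_iff]
  intro l hl
  ext j
  have h1 : f j (Finsupp.linearCombination ℝ (ww f e) l) = 0 := by rw [hl, map_zero]
  rw [Finsupp.linearCombination_apply, map_finsuppSum] at h1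
  have h2 : (l.sum fun i a => f j (a • ww f e i)) = l.sum fun i a => if j = i then a else 0 := by
    refine Finsupp.sum_congr fun i _ => ?_
    rw [map_smul, f_ww hf1 hf0 i j, smul_eq_mul]
    split <;> ring
  rw [h2, Finsupp.sum_ite_eq] at h1
  simp only [Finsupp.coe_zero, Pi.zero_apply]
  by_cases hj : j ∈ l.support
  · rwa [if_pos hj] at h1
  · exact Finsupp.notMem_support_iff.1 hj

lemma span_ww : Submodule.span ℝ (Set.range e) ≤ Submodule.span ℝ (Set.range (ww f e)) := by
  rw [Submodule.span_le]
  rintro - ⟨n, rfl⟩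
  have : e n = ww f e n + ∑ k : Fin n, f k (e n) • ww f e k := by
    rw [ww_spec]; abel
  rw [this]
  refine add_mem (Submodule.subset_span ⟨n, rfl⟩) ?_
  exact Submodule.sum_mem _ fun k _ => Submodule.smul_mem _ _ (Submodule.subset_span ⟨k, rfl⟩)

lemma sum_mem_smul_of_convex {U : Set X} (hc : Convex ℝ U) (h0 : (0:X) ∈ U)
    (s : Finset ℕ) (t : ℕ → ℝ) (z : ℕ → X) (ht : ∀ n ∈ s, 0 ≤ t n)
    (hz : ∀ n ∈ s, z n ∈ t n • U) :
    (∑ n ∈ s, z n) ∈ (∑ n ∈ s, t n) • U := by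
  classical
  induction s using Finset.induction_on with
  | empty => simpa using Set.mem_smul_set.2 ⟨0, h0, by simp⟩
  | @insert a s' ha ih =>
    rw [Finset.sum_insert ha, Finset.sum_insert ha,
      hc.add_smul (ht a (Finset.mem_insert_self a s'))
        (Finset.sum_nonneg fun n hn => ht n (Finset.mem_insert_of_mem hn))]
    exact Set.add_mem_add (hz a (Finset.mem_insert_self a s'))
      (ih (fun n hn => ht n (Finset.mem_insert_of_mem hn))
        (fun n hn => hz n (Finset.mem_insert_of_mem hn)))

variable [IsTopologicalAddGroup X] [ContinuousSMul ℝ X] [LocallyConvexSpace ℝ X] [T2Space X]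

lemma exists_functional_aux (S : Submodule ℝ X) [FiniteDimensional ℝ S] {x : X} (hx : x ∉ S) :
    ∃ f : X →L[ℝ] ℝ, f x = 1 ∧ ∀ y ∈ S, f y = 0 := by
  obtain ⟨f, u, hfs, hux⟩ :=
    geometric_hahn_banach_closed_point S.convex S.closed_of_finiteDimensional hx
  have h0 : (0:ℝ) < u := by simpa using hfs 0 S.zero_mem
  have hker : ∀ y ∈ S, f y = 0 := by
    intro y hy
    by_contra hne
    have h1 : f (((u + 1) / f y) • y) < u := hfs _ (S.smul_mem _ hy)
    rw [map_smul, smul_eq_mul, div_mul_cancel₀ _ hne] at h1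
    linarith
  have hfx : f x ≠ 0 := by
    intro h; rw [h] at hux; linarith
  refine ⟨(f x)⁻¹ • f, ?_, fun y hy => ?_⟩
  · simp [inv_mul_cancel₀ hfx]
  · simp [hker y hy]

end Aux


/-- Let `X` be a Hausdorff, first-countable, locally convex topological vector space over
`ℝ` such that every nonempty closed, von Neumann bounded, convex subset of `X` has an
extreme point. Then the Hamel dimension of `X` over `ℝ` is not countably infinite. -/
theorem stmt3 (X : Type*) [AddCommGroup X] [Module ℝ X] [TopologicalSpace X]
    [IsTopologicalAddGroup X] [ContinuousSMul ℝ X] [LocallyConvexSpace ℝ X]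
    [T2Space X] [FirstCountableTopology X]
    (h : ∀ C : Set X, C.Nonempty → IsClosed C → Bornology.IsVonNBounded ℝ C →
      Convex ℝ C → (Set.extremePoints ℝ C).Nonempty) :
    Module.rank ℝ X ≠ Cardinal.aleph0 := by
  intro hrank
  classical
  -- a Hamel basis indexed by ℕ
  have b0 := Module.Basis.ofVectorSpace ℝ X
  have hcard : Cardinal.mk (Module.Basis.ofVectorSpaceIndex ℝ X) = Cardinal.aleph0 := by
    rw [b0.mk_eq_rank'', hrank]
  haveI : Countable (Module.Basis.ofVectorSpaceIndex ℝ X) := Cardinal.mk_le_aleph0_iff.1 hcard.le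
  haveI : Infinite (Module.Basis.ofVectorSpaceIndex ℝ X) := Cardinal.aleph0_le_mk_iff.1 hcard.ge
  obtain ⟨d⟩ := nonempty_denumerable (Module.Basis.ofVectorSpaceIndex ℝ X)
  let e : Module.Basis ℕ ℝ X := b0.reindex (@Denumerable.eqv _ d)
  -- biorthogonal continuous functionals
  have hfex : ∀ n, ∃ f : X →L[ℝ] ℝ, f (e n) = 1 ∧
      ∀ y ∈ Submodule.span ℝ ((e : ℕ → X) '' Set.Iio n), f y = 0 := by
    intro n
    have hfin : (((e : ℕ → X)) '' Set.Iio n).Finite := (Set.finite_Iio n).image _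
    haveI := FiniteDimensional.span_of_finite ℝ hfin
    refine exists_functional_aux _ ?_
    exact e.linearIndependent.notMem_span_image (by simp)
  choose f hf1 hf0 using hfex
  set w : ℕ → X := ww f e with hw
  -- the new basis
  have hli : LinearIndependent ℝ w := linearIndependent_ww hf1 hf0
  have hsp : ⊤ ≤ Submodule.span ℝ (Set.range w) := by
    rw [← e.span_eq]; exact span_ww
  let bw : Module.Basis ℕ ℝ X := Module.Basis.mk hli hsp
  have hbw : ∀ n, bw n = w n := fun n => Module.Basis.mk_apply hli hsp n
  have hwne : ∀ n, w n ≠ 0 := by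
    intro n hn
    have := f_ww (f := f) (e := e) hf1 hf0 n n
    rw [← hw, hn, map_zero, if_pos rfl] at this
    exact zero_ne_one this
  -- f gives the coordinates w.r.t. bw
  have hcoord : ∀ j (x : X), f j x = bw.repr x j := by
    intro j x
    have hlm : (f j).toLinearMap = bw.coord j := by
      refine bw.ext fun i => ?_
      rw [Module.Basis.coord_apply, Module.Basis.repr_self, Finsupp.single_apply,
        ContinuousLinearMap.coe_coe, hbw i, hw, f_ww hf1 hf0 i j]
      by_cases hij : i = j
      · simp [hij]
      · simp [hij, Ne.symm hij]
    calc f j x = (f j).toLinearMap x := rfl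
      _ = bw.coord j x := by rw [hlm]
      _ = bw.repr x j := Module.Basis.coord_apply _ _ _
  -- antitone neighborhood basis and small scalars
  obtain ⟨V, hV⟩ := (𝓝 (0:X)).exists_antitone_basis
  have hcex : ∀ n, ∃ c : ℝ, c ≠ 0 ∧ ((2:ℝ)^n * c) • w n ∈ V n := by
    intro n
    have hcont : Continuous fun t : ℝ => t • w n := continuous_id.smul continuous_const
    have h1 : Tendsto (fun t : ℝ => t • w n) (𝓝 0) (𝓝 0) := by
      simpa using hcont.tendsto 0
    have h2 : ∀ᶠ t : ℝ in 𝓝 0, t • w n ∈ V n := h1.eventually_mem (hV.1.mem_of_mem trivial)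
    have h3 : ∀ᶠ t : ℝ in 𝓝[≠] (0:ℝ), t • w n ∈ V n ∧ t ≠ 0 :=
      (h2.filter_mono nhdsWithin_le_nhds).and self_mem_nhdsWithin
    obtain ⟨t, htV, ht0⟩ := h3.exists
    refine ⟨t / 2^n, div_ne_zero ht0 (pow_ne_zero n two_ne_zero), ?_⟩
    have ht' : (2:ℝ)^n * (t / 2^n) = t := by field_simp
    rw [ht']; exact htV
  choose c hc0 hcV using hcex
  set u : ℕ → X := fun n => c n • w n with hu
  set g : ℕ → X →L[ℝ] ℝ := fun n => (c n)⁻¹ • f n with hg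
  have hgapp : ∀ n (x : X), g n x = (c n)⁻¹ * f n x := fun n x => rfl
  have huapp : ∀ n, u n = c n • w n := fun n => rfl
  have hgu : ∀ n m, g n (u m) = if n = m then 1 else 0 := by
    intro n m
    rw [hgapp, huapp, map_smul, smul_eq_mul, hw, f_ww hf1 hf0 m n]
    rcases eq_or_ne n m with rfl | hnm
    · simp [inv_mul_cancel₀ (hc0 n)]
    · simp [hnm]
  set C : Set X := {x | ∀ n, |g n x| ≤ 1} with hC
  have hmemC : ∀ x : X, x ∈ C ↔ ∀ n, |g n x| ≤ 1 := fun x => Iff.rfl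
  -- representation of any point
  have hxsum : ∀ x : X, x = ∑ n ∈ (bw.repr x).support, (g n x) • u n := by
    intro x
    conv_lhs => rw [← bw.linearCombination_repr x]
    rw [Finsupp.linearCombination_apply, Finsupp.sum]
    refine Finset.sum_congr rfl fun n _ => ?_
    rw [hbw n, hgapp, huapp, smul_smul, ← hcoord n x]
    have hcn := hc0 n
    congr 1
    field_simp
  -- C is closed
  have hclosed : IsClosed C := by
    have hCeq : C = ⋂ n, {x : X | |g n x| ≤ 1} := by
      ext x; simp only [hmemC, Set.mem_iInter, Set.mem_setOf_eq]
    rw [hCeq]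
    exact isClosed_iInter fun n => isClosed_le ((g n).continuous.abs) continuous_const
  -- C is convex
  have hconv : Convex ℝ C := by
    intro x hx y hy a b ha hb hab
    rw [hmemC]
    intro n
    have h1 : g n (a • x + b • y) = a * g n x + b * g n y := by
      rw [map_add, map_smul, map_smul, smul_eq_mul, smul_eq_mul]
    rw [h1]
    calc |a * g n x + b * g n y| ≤ |a * g n x| + |b * g n y| := abs_add_le _ _
      _ = a * |g n x| + b * |g n y| := by
          rw [abs_mul, abs_mul, abs_of_nonneg ha, abs_of_nonneg hb]
      _ ≤ a * 1 + b * 1 := by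
          gcongr
          exacts [hx n, hy n]
      _ = 1 := by rw [mul_one, mul_one, hab]
  -- C is von Neumann bounded
  have hbdd : Bornology.IsVonNBounded ℝ C := by
    intro W hW
    obtain ⟨U, ⟨hU_nhds, hU_bal, hU_conv⟩, hUW⟩ := (nhds_hasBasis_absConvex ℝ X).mem_iff.1 hW
    obtain ⟨k, -, hVkU⟩ := hV.1.mem_iff.1 hU_nhds
    have hr : ∀ n, ∃ r : ℝ, 1 ≤ r ∧ u n ∈ r • U := by
      intro n
      obtain ⟨r0, hr0⟩ := absorbs_iff_norm.1 ((absorbent_nhds_zero (𝕜 := ℝ) hU_nhds) (u n))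
      refine ⟨max r0 1, le_max_right _ _, ?_⟩
      refine hr0 (max r0 1) ?_ (Set.mem_singleton _)
      rw [Real.norm_eq_abs, abs_of_nonneg (le_trans zero_le_one (le_max_right _ _))]
      exact le_max_left _ _
    choose r hr1 hrU using hr
    set R := (∑ n ∈ Finset.range k, r n) + 2 with hR
    have hrsum_nonneg : 0 ≤ ∑ n ∈ Finset.range k, r n :=
      Finset.sum_nonneg fun n _ => le_trans zero_le_one (hr1 n)
    rw [absorbs_iff_norm]
    refine ⟨R, fun a ha => fun x hx => ?_⟩
    replace hx : ∀ n, |g n x| ≤ 1 := hx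
    set s := (bw.repr x).support with hs
    set t : ℕ → ℝ := fun n => if n < k then r n else (2⁻¹:ℝ)^n with ht
    have htapp : ∀ n, t n = if n < k then r n else (2⁻¹:ℝ)^n := fun n => rfl
    have htnonneg : ∀ n, 0 ≤ t n := by
      intro n
      rw [htapp]
      split
      · exact le_trans zero_le_one (hr1 n)
      · positivity
    have hzmem : ∀ n ∈ s, (g n x) • u n ∈ t n • U := by
      intro n _
      by_cases hnk : n < k
      · obtain ⟨y, hyU, hy⟩ := hrU n
        have h1 : (g n x) • u n = (g n x * r n) • y := by rw [← hy, smul_smul]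
        have h2 : (g n x * r n) • y ∈ (g n x * r n) • U := Set.smul_mem_smul_set hyU
        have h3 : (g n x * r n) • U ⊆ (t n) • U := by
          apply hU_bal.smul_mono
          rw [htapp, if_pos hnk, Real.norm_eq_abs, Real.norm_eq_abs, abs_mul,
            abs_of_nonneg (le_trans zero_le_one (hr1 n))]
          calc |g n x| * r n ≤ 1 * r n :=
                mul_le_mul_of_nonneg_right (hx n) (le_trans zero_le_one (hr1 n))
            _ = r n := one_mul _
        rw [h1]; exact h3 h2
      · have hkn : k ≤ n := le_of_not_gt hnk
        have hvn : ((2:ℝ)^n * c n) • w n ∈ U := hVkU (hV.antitone hkn (hcV n))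
        have h1 : (g n x) • u n = (g n x * (2⁻¹:ℝ)^n) • (((2:ℝ)^n * c n) • w n) := by
          rw [huapp, smul_smul, smul_smul]
          congr 1
          rw [inv_pow]
          field_simp
        have h2 : (g n x * (2⁻¹:ℝ)^n) • (((2:ℝ)^n * c n) • w n)
            ∈ (g n x * (2⁻¹:ℝ)^n) • U := Set.smul_mem_smul_set hvn
        have h3 : (g n x * (2⁻¹:ℝ)^n) • U ⊆ t n • U := by
          apply hU_bal.smul_mono
          rw [htapp, if_neg hnk, Real.norm_eq_abs, Real.norm_eq_abs, abs_mul]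
          calc |g n x| * |(2⁻¹:ℝ)^n| ≤ 1 * |(2⁻¹:ℝ)^n| :=
                mul_le_mul_of_nonneg_right (hx n) (abs_nonneg _)
            _ = |(2⁻¹:ℝ)^n| := one_mul _
        rw [h1]; exact h3 h2
    have hsumU : x ∈ (∑ n ∈ s, t n) • U := by
      have hmm := sum_mem_smul_of_convex hU_conv (mem_of_mem_nhds hU_nhds) s t
        (fun n => g n x • u n) (fun n _ => htnonneg n) hzmem
      rwa [← hxsum x] at hmm
    have hsum_le : (∑ n ∈ s, t n) ≤ R := by
      rw [← Finset.sum_filter_add_sum_filter_not s (· < k)]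
      have hA : (∑ n ∈ s.filter (· < k), t n) ≤ ∑ n ∈ Finset.range k, r n := by
        have e1 : (∑ n ∈ s.filter (· < k), t n) = ∑ n ∈ s.filter (· < k), r n := by
          refine Finset.sum_congr rfl fun n hn => ?_
          rw [htapp, if_pos (Finset.mem_filter.1 hn).2]
        rw [e1]
        refine Finset.sum_le_sum_of_subset_of_nonneg ?_
          (fun n _ _ => le_trans zero_le_one (hr1 n))
        intro n hn
        exact Finset.mem_range.2 (Finset.mem_filter.1 hn).2
      have hB : (∑ n ∈ s.filter (fun n => ¬ n < k), t n) ≤ 2 := by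
        have e1 : (∑ n ∈ s.filter (fun n => ¬ n < k), t n)
            = ∑ n ∈ s.filter (fun n => ¬ n < k), (2⁻¹:ℝ)^n := by
          refine Finset.sum_congr rfl fun n hn => ?_
          rw [htapp, if_neg (Finset.mem_filter.1 hn).2]
        rw [e1]
        have hsub : s.filter (fun n => ¬ n < k) ⊆ Finset.range (s.sup id + 1) := by
          intro n hn
          refine Finset.mem_range.2 (Nat.lt_succ_of_le ?_)
          exact Finset.le_sup (f := id) (Finset.mem_filter.1 hn).1
        calc (∑ n ∈ s.filter (fun n => ¬ n < k), (2⁻¹:ℝ)^n)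
            ≤ ∑ n ∈ Finset.range (s.sup id + 1), (2⁻¹:ℝ)^n :=
              Finset.sum_le_sum_of_subset_of_nonneg hsub (fun n _ _ => by positivity)
          _ ≤ 2 := by simpa [one_div] using sum_geometric_two_le (s.sup id + 1)
      linarith
    have hxa : x ∈ a • U := by
      have hsub : (∑ n ∈ s, t n) • U ⊆ a • U := by
        apply hU_bal.smul_mono
        rw [Real.norm_eq_abs, abs_of_nonneg (Finset.sum_nonneg fun n _ => htnonneg n)]
        exact le_trans hsum_le ha
      exact hsub hsumU
    exact Set.smul_set_mono hUW hxa
  -- extreme point and contradiction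
  obtain ⟨p, hp⟩ := h C ⟨0, fun n => by simp⟩ hclosed hbdd hconv
  rw [mem_extremePoints] at hp
  obtain ⟨hpC, hpext⟩ := hp
  replace hpC : ∀ n, |g n p| ≤ 1 := hpC
  obtain ⟨m, hm⟩ := Infinite.exists_notMem_finset ((bw.repr p).support)
  have hgmp : g m p = 0 := by
    rw [hgapp, hcoord m p, Finsupp.notMem_support_iff.1 hm, mul_zero]
  have humne : u m ≠ 0 := by
    rw [huapp]; exact smul_ne_zero (hc0 m) (hwne m)
  have h1 : p + u m ∈ C := by
    rw [hmemC]
    intro n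
    rw [map_add, hgu n m]
    rcases eq_or_ne n m with rfl | hnm
    · rw [if_pos rfl, hgmp]; norm_num
    · rw [if_neg hnm, add_zero]; exact hpC n
  have h2 : p - u m ∈ C := by
    rw [hmemC]
    intro n
    rw [map_sub, hgu n m]
    rcases eq_or_ne n m with rfl | hnm
    · rw [if_pos rfl, hgmp]; norm_num
    · rw [if_neg hnm, sub_zero]; exact hpC n
  have hseg : p ∈ openSegment ℝ (p + u m) (p - u m) := by
    refine ⟨1/2, 1/2, by norm_num, by norm_num, by norm_num, ?_⟩
    module
  have hfin := (hpext _ h1 _ h2 hseg).1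
  exact humne (by simpa using congrArg (fun z => z - p) hfin)
end

section
/- Let X be a real Banach space and (x_n)_{n∈ℕ} a sequence in X. Then the summing multiplier space S(∑x_n) := {(a_n) ∈ ℓ∞ : the series ∑_n a_n x_n converges in X} is not equal to c, the set of convergent real sequences. In other words, no series in a Banach space has c as its summing multiplier space. -/
open Filter Topology Finset

lemma stmt4_aux (X : Type*) [NormedAddCommGroup X] [NormedSpace ℝ X] [CompleteSpace X]
    (x : ℕ → X) (hx : CauchySeq (fun m => ∑ n ∈ Finset.range m, x n)) :
    ∃ a : ℕ → ℝ, (∀ n, a n = 0 ∨ a n = 1) ∧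
      (∃ t : X, Tendsto (fun m => ∑ n ∈ Finset.range m, a n • x n) atTop (𝓝 t)) ∧
      ¬ ∃ l : ℝ, Tendsto a atTop (𝓝 l) := by
  classical
  have h2 : ∀ j : ℕ, ∃ N, ∀ p ≥ N, ∀ q ≥ N,
      dist (∑ n ∈ Finset.range p, x n) (∑ n ∈ Finset.range q, x n) < (1/2 : ℝ)^j := by
    intro j
    exact Metric.cauchySeq_iff.mp hx _ (by positivity)
  choose N hN using h2
  -- the block boundaries
  set φ : ℕ → ℕ := fun j => Nat.rec (N 0) (fun j ih => max (N (j+1)) (ih + 1)) j with hφ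
  have hφsucc : ∀ j, φ j < φ (j+1) := by
    intro j; exact lt_of_lt_of_le (Nat.lt_succ_self _) (le_max_right _ _)
  have hφmono : StrictMono φ := strictMono_nat_of_lt_succ hφsucc
  have hφN : ∀ j, N j ≤ φ j := by
    intro j; cases j with
    | zero => exact le_rfl
    | succ j => exact le_max_left _ _
  have hφself : ∀ j, j ≤ φ j := fun j => hφmono.le_apply
  -- segment bound
  have hseg : ∀ j p q, φ j ≤ p → p ≤ q → ‖∑ n ∈ Finset.Ico p q, x n‖ ≤ (1/2 : ℝ)^j := by
    intro j p q hp hpq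
    rw [Finset.sum_Ico_eq_sub _ hpq, ← dist_eq_norm]
    exact le_of_lt (hN j q (le_trans (le_trans (hφN j) hp) hpq) p (le_trans (hφN j) hp))
  -- the multiplier sequence
  refine ⟨fun n => if ∃ j, φ (2*j) ≤ n ∧ n < φ (2*j+1) then 1 else 0, ?_, ?_, ?_⟩
  · intro n; by_cases h : ∃ j, φ (2*j) ≤ n ∧ n < φ (2*j+1)
    · right; exact if_pos h
    · left; exact if_neg h
  · -- convergence of ∑ aₙ xₙ
    set D : ℕ → ℕ → X := fun j m =>
      (∑ k ∈ Finset.range (min (φ (2*j+1)) m), x k) -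
        ∑ k ∈ Finset.range (min (φ (2*j)) m), x k with hD
    set P : ℕ → X := fun m => ∑ n ∈ Finset.range m,
      (if ∃ j, φ (2*j) ≤ n ∧ n < φ (2*j+1) then (1:ℝ) else 0) • x n with hPdef
    have hP : ∀ m, P m = ∑ j ∈ Finset.range m, D j m := by
      intro m
      have step1 : P m = ∑ n ∈ (Finset.range m).filter
          (fun n => ∃ j, φ (2*j) ≤ n ∧ n < φ (2*j+1)), x n := by
        rw [Finset.sum_filter, hPdef]
        refine Finset.sum_congr rfl fun n _ => ?_
        by_cases h : ∃ j, φ (2*j) ≤ n ∧ n < φ (2*j+1)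
        · rw [if_pos h, if_pos h, one_smul]
        · rw [if_neg h, if_neg h, zero_smul]
      have step2 : (Finset.range m).filter (fun n => ∃ j, φ (2*j) ≤ n ∧ n < φ (2*j+1)) =
          (Finset.range m).biUnion
            (fun j => Finset.Ico (min (φ (2*j)) m) (min (φ (2*j+1)) m)) := by
        ext n
        simp only [Finset.mem_filter, Finset.mem_range, Finset.mem_biUnion, Finset.mem_Ico]
        constructor
        · rintro ⟨hnm, j, hj1, hj2⟩
          have h2j := hφself (2*j)
          exact ⟨j, by omega, by omega, by omega⟩
        · rintro ⟨j, hjm, h1, h2⟩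
          refine ⟨by omega, j, by omega, by omega⟩
      rw [step1, step2, Finset.sum_biUnion]
      · refine Finset.sum_congr rfl fun j _ => ?_
        have hle : min (φ (2*j)) m ≤ min (φ (2*j+1)) m :=
          min_le_min (hφmono.monotone (Nat.le_succ _)) le_rfl
        rw [Finset.sum_Ico_eq_sub x hle]
      · -- disjointness
        have key : ∀ i j, i < j → Disjoint
            (Finset.Ico (min (φ (2*i)) m) (min (φ (2*i+1)) m))
            (Finset.Ico (min (φ (2*j)) m) (min (φ (2*j+1)) m)) := by
          intro i j h
          have h1 : φ (2*i+1) ≤ φ (2*j) := hφmono.monotone (show 2*i+1 ≤ 2*j by omega)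
          rw [Finset.disjoint_left]
          intro n hn1 hn2
          rw [Finset.mem_Ico] at hn1 hn2
          omega
        intro i _ j _ hij
        rcases hij.lt_or_gt with h | h
        · exact key i j h
        · exact (key j i h).symm
    have hDbound : ∀ j m, ‖D j m‖ ≤ (1/2 : ℝ)^j := by
      intro j m
      rcases le_or_gt m (φ (2*j)) with h | h
      · have e1 : min (φ (2*j)) m = m := min_eq_right h
        have e2 : min (φ (2*j+1)) m = m :=
          min_eq_right (h.trans (hφmono.monotone (Nat.le_succ _)))
        simp only [hD, e1, e2, sub_self, norm_zero]
        positivity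
      · have e1 : min (φ (2*j)) m = φ (2*j) := min_eq_left h.le
        have hle : φ (2*j) ≤ min (φ (2*j+1)) m :=
          le_min (hφmono.monotone (Nat.le_succ _)) h.le
        have : ‖D j m‖ ≤ (1/2 : ℝ)^(2*j) := by
          simp only [hD, e1, ← Finset.sum_Ico_eq_sub x hle]
          exact hseg (2*j) _ _ le_rfl hle
        refine this.trans (pow_le_pow_of_le_one (by norm_num) (by norm_num) (by omega))
    have hDconst : ∀ j m, φ (2*j+1) ≤ m → D j m =
        (∑ k ∈ Finset.range (φ (2*j+1)), x k) - ∑ k ∈ Finset.range (φ (2*j)), x k := by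
      intro j m h
      simp only [hD, min_eq_left h, min_eq_left ((hφmono.monotone (Nat.le_succ _)).trans h)]
    have hDzero : ∀ j m, m ≤ j → D j m = 0 := by
      intro j m h
      have h1 : m ≤ φ (2*j) := le_trans (le_trans h (by omega)) (hφself (2*j))
      have h2 : m ≤ φ (2*j+1) := h1.trans (hφmono.monotone (Nat.le_succ _))
      simp only [hD, min_eq_right h1, min_eq_right h2, sub_self]
    have hPext : ∀ m M, m ≤ M → P m = ∑ j ∈ Finset.range M, D j m := by
      intro m M h
      rw [hP m]
      refine Finset.sum_subset (Finset.range_subset_range.mpr h) fun j hj hnj => ?_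
      rw [Finset.mem_range] at hj hnj
      exact hDzero j m (by omega)
    refine cauchySeq_tendsto_of_complete (Metric.cauchySeq_iff'.mpr ?_)
    intro ε hε
    obtain ⟨J, hJ⟩ : ∃ J : ℕ, (1/2 : ℝ)^J < ε/4 :=
      exists_pow_lt_of_lt_one (by positivity) (by norm_num)
    refine ⟨φ (2*J), fun m hm => ?_⟩
    have hNm : φ (2*J) ≤ m := hm
    have hJm : J ≤ m := le_trans (le_trans (by omega) (hφself (2*J))) hm
    have key : P m - P (φ (2*J)) = ∑ j ∈ Finset.Ico J m, (D j m - D j (φ (2*J))) := by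
      rw [hP m, hPext (φ (2*J)) m hNm, ← Finset.sum_sub_distrib, Finset.range_eq_Ico,
        ← Finset.sum_Ico_consecutive _ (Nat.zero_le J) hJm]
      have hz : ∑ j ∈ Finset.Ico 0 J, (D j m - D j (φ (2*J))) = 0 := by
        refine Finset.sum_eq_zero fun j hj => ?_
        have hj' : j < J := (Finset.mem_Ico.mp hj).2
        have hc1 : φ (2*j+1) ≤ φ (2*J) := hφmono.monotone (show 2*j+1 ≤ 2*J by omega)
        rw [hDconst j m (hc1.trans hNm), hDconst j (φ (2*J)) hc1, sub_self]
      rw [hz, zero_add]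
    rw [dist_eq_norm, key]
    calc ‖∑ j ∈ Finset.Ico J m, (D j m - D j (φ (2*J)))‖
        ≤ ∑ j ∈ Finset.Ico J m, ‖D j m - D j (φ (2*J))‖ := norm_sum_le _ _
      _ ≤ ∑ j ∈ Finset.Ico J m, (2 * (1/2 : ℝ)^j) := by
          refine Finset.sum_le_sum fun j _ => ?_
          calc ‖D j m - D j (φ (2*J))‖ ≤ ‖D j m‖ + ‖D j (φ (2*J))‖ := norm_sub_le _ _
            _ ≤ (1/2 : ℝ)^j + (1/2 : ℝ)^j := add_le_add (hDbound j m) (hDbound j _)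
            _ = 2 * (1/2 : ℝ)^j := by ring
      _ = 2 * ∑ j ∈ Finset.Ico J m, (1/2 : ℝ)^j := by rw [Finset.mul_sum]
      _ ≤ 2 * ((1/2 : ℝ)^J * 2) := by
          refine mul_le_mul_of_nonneg_left ?_ (by norm_num)
          rw [Finset.sum_Ico_eq_sum_range]
          simp_rw [pow_add]
          rw [← Finset.mul_sum]
          exact mul_le_mul_of_nonneg_left (sum_geometric_two_le _) (by positivity)
      _ = 4 * (1/2 : ℝ)^J := by ring
      _ < ε := by linarith
  · -- divergence of a
    rintro ⟨l, hl⟩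
    have ht2 : Tendsto (fun j : ℕ => 2*j) atTop atTop :=
      StrictMono.tendsto_atTop (fun i j h => by omega)
    have h1 : Tendsto (fun j : ℕ =>
        if ∃ i, φ (2*i) ≤ φ (2*j) ∧ φ (2*j) < φ (2*i+1) then (1:ℝ) else 0) atTop (𝓝 l) :=
      hl.comp ((hφmono.tendsto_atTop).comp ht2)
    have h0 : Tendsto (fun j : ℕ =>
        if ∃ i, φ (2*i) ≤ φ (2*j+1) ∧ φ (2*j+1) < φ (2*i+1) then (1:ℝ) else 0) atTop (𝓝 l) := by
      have hodd : Tendsto (fun j : ℕ => 2*j+1) atTop atTop :=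
        StrictMono.tendsto_atTop (fun i j h => by omega)
      exact hl.comp ((hφmono.tendsto_atTop).comp hodd)
    have e1 : l = 1 := by
      refine tendsto_nhds_unique h1 ?_
      have : ∀ j : ℕ, (if ∃ i, φ (2*i) ≤ φ (2*j) ∧ φ (2*j) < φ (2*i+1) then (1:ℝ) else 0) = 1 :=
        fun j => if_pos ⟨j, le_rfl, hφmono (Nat.lt_succ_self _)⟩
      simp only [this]; exact tendsto_const_nhds
    have e0 : l = 0 := by
      refine tendsto_nhds_unique h0 ?_
      have : ∀ j : ℕ, (if ∃ i, φ (2*i) ≤ φ (2*j+1) ∧ φ (2*j+1) < φ (2*i+1) then (1:ℝ) else 0) = 0 := by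
        intro j
        refine if_neg ?_
        rintro ⟨i, hi1, hi2⟩
        have k1 : 2*i ≤ 2*j+1 := hφmono.le_iff_le.mp hi1
        have k2 : 2*j+1 < 2*i+1 := hφmono.lt_iff_lt.mp hi2
        omega
      simp only [this]; exact tendsto_const_nhds
    norm_num [e1] at e0

open Filter Topology

/-- For a real Banach space `X` and a sequence `x` in `X`, the summing multiplier space
`S(∑ xₙ) = {(aₙ) ∈ ℓ∞ : ∑ aₙ xₙ converges}` is never equal to `c`, the space of
convergent real sequences. -/
theorem stmt4 (X : Type*) [NormedAddCommGroup X] [NormedSpace ℝ X] [CompleteSpace X]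
    (x : ℕ → X) :
    {a : lp (fun _ : ℕ => ℝ) ⊤ | ∃ s : X,
        Tendsto (fun m => ∑ n ∈ Finset.range m, a n • x n) atTop (𝓝 s)} ≠
      {a : lp (fun _ : ℕ => ℝ) ⊤ | ∃ l : ℝ, Tendsto (fun n => a n) atTop (𝓝 l)} := by
  intro h
  have hone : Memℓp (fun _ : ℕ => (1:ℝ)) ⊤ :=
    memℓp_infty ⟨1, by rintro r ⟨n, rfl⟩; simp⟩
  set one : lp (fun _ : ℕ => ℝ) ⊤ := ⟨fun _ => 1, hone⟩ with hone'
  have h1 : one ∈ {a : lp (fun _ : ℕ => ℝ) ⊤ | ∃ l : ℝ, Tendsto (fun n => a n) atTop (𝓝 l)} :=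
    ⟨1, tendsto_const_nhds⟩
  rw [← h] at h1
  obtain ⟨s, hs⟩ := h1
  have hs' : Tendsto (fun m => ∑ n ∈ Finset.range m, x n) atTop (𝓝 s) := by
    have : (fun m => ∑ n ∈ Finset.range m, (one : ℕ → ℝ) n • x n) =
        fun m => ∑ n ∈ Finset.range m, x n := by
      funext m; exact Finset.sum_congr rfl fun n _ => one_smul ℝ (x n)
    rwa [this] at hs
  obtain ⟨a, haval, ⟨t, ht⟩, hdiv⟩ := stmt4_aux X x hs'.cauchySeq
  have hamem : Memℓp a ⊤ := by
    refine memℓp_infty ⟨1, ?_⟩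
    rintro r ⟨n, rfl⟩
    rcases haval n with h' | h' <;> simp [h']
  have hL : (⟨a, hamem⟩ : lp (fun _ : ℕ => ℝ) ⊤) ∈
      {a : lp (fun _ : ℕ => ℝ) ⊤ | ∃ s : X,
        Tendsto (fun m => ∑ n ∈ Finset.range m, a n • x n) atTop (𝓝 s)} := ⟨t, ht⟩
  rw [h] at hL
  exact hdiv hL
end

section
/- Let X be a real normed space. If there exists a continuous linear operator T : ℓ∞(X) → X which is shift-invariant and satisfies T((x_n)) = lim_n x_n for every convergent sequence (x_n) ∈ c(X), then X is complete. -/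
open Filter Topology

/-- If a real normed space `X` admits a continuous linear operator `T : ℓ∞(X) → X` which is
invariant under the forward shift and extends the limit function on `c(X)`, then `X` is
complete. -/
theorem stmt5 (X : Type*) [NormedAddCommGroup X] [NormedSpace ℝ X]
    (T : lp (fun _ : ℕ => X) ⊤ →L[ℝ] X)
    (hshift : ∀ f g : lp (fun _ : ℕ => X) ⊤, (∀ n, g n = f (n + 1)) → T g = T f)
    (hlim : ∀ (f : lp (fun _ : ℕ => X) ⊤) (x : X),
      Tendsto (fun n => f n) atTop (𝓝 x) → T f = x) :
    CompleteSpace X := by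
  apply Metric.complete_of_cauchySeq_tendsto
  intro u hu
  -- the sequence is bounded, hence each shifted tail is in ℓ∞
  obtain ⟨R, hR⟩ := (Metric.isBounded_iff_subset_closedBall 0).mp hu.isBounded_range
  have hb : ∀ k, Memℓp (fun n : ℕ => u (n + k)) ⊤ := by
    intro k
    apply memℓp_infty
    refine ⟨R, ?_⟩
    rintro r ⟨n, rfl⟩
    simpa [dist_eq_norm] using hR ⟨n + k, rfl⟩
  set F : ℕ → lp (fun _ : ℕ => X) ⊤ := fun k => ⟨fun n => u (n + k), hb k⟩ with hF
  have hFapp : ∀ k n, F k n = u (n + k) := fun k n => rfl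
  have hTF : ∀ k, T (F k) = T (F 0) := by
    intro k
    induction k with
    | zero => rfl
    | succ k ih =>
      rw [← ih]
      exact hshift (F k) (F (k + 1)) (fun n => by
        simp only [hFapp]; ring_nf)
  refine ⟨T (F 0), ?_⟩
  rw [Metric.tendsto_atTop]
  intro ε hε
  obtain ⟨N, hN⟩ := Metric.cauchySeq_iff.mp hu (ε / (2 * (‖T‖ + 1)))
    (by positivity)
  refine ⟨N, fun k hk => ?_⟩
  -- constant sequence u k
  have hc : Memℓp (fun _ : ℕ => u k) ⊤ := by
    apply memℓp_infty
    exact ⟨‖u k‖, by rintro r ⟨n, rfl⟩; rfl⟩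
  set C : lp (fun _ : ℕ => X) ⊤ := ⟨fun _ => u k, hc⟩ with hC
  have hTC : T C = u k := hlim C (u k) tendsto_const_nhds
  have key : ‖F k - C‖ ≤ ε / (2 * (‖T‖ + 1)) := by
    apply lp.norm_le_of_forall_le (by positivity)
    intro n
    have : (F k - C) n = u (n + k) - u k := by
      rw [lp.coeFn_sub]; rfl
    rw [this, ← dist_eq_norm]
    exact le_of_lt (hN (n + k) (le_trans hk (Nat.le_add_left k n)) k hk)
  have : dist (u k) (T (F 0)) = ‖T (F k - C)‖ := by
    rw [map_sub, hTC, hTF k, dist_eq_norm, norm_sub_rev]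
  rw [this]
  calc ‖T (F k - C)‖ ≤ ‖T‖ * ‖F k - C‖ := T.le_opNorm _
    _ ≤ ‖T‖ * (ε / (2 * (‖T‖ + 1))) := by
        exact mul_le_mul_of_nonneg_left key (norm_nonneg T)
    _ < ε := by
        rw [mul_div_assoc']
        rw [div_lt_iff₀ (by positivity)]
        nlinarith [norm_nonneg T]
end

section
/- There is no Banach limit on c₀: there exists no continuous linear operator T : ℓ∞(c₀) → c₀ with ‖T‖ = 1 which is shift-invariant and satisfies T((x_n)) = lim_n x_n for every convergent sequence (x_n) of elements of c₀. -/
set_option maxHeartbeats 1600000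
set_option synthInstance.maxHeartbeats 400000

open Filter Topology

noncomputable def zem (m : ℕ) : ZeroAtInftyContinuousMap ℕ ℝ where
  toFun := fun k => if k = m then 1 else 0
  continuous_toFun := continuous_of_discreteTopology
  zero_at_infty' := by
    rw [cocompact_eq_atTop]
    refine Tendsto.congr' ?_ tendsto_const_nhds
    filter_upwards [Filter.eventually_gt_atTop m] with k hk
    simp [hk.ne']

@[simp] lemma zem_apply (m k : ℕ) : zem m k = if k = m then 1 else 0 := rfl

noncomputable def zsfn (j : ℕ) : ZeroAtInftyContinuousMap ℕ ℝ where
  toFun := fun k => if k ≤ j then 1 else 0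
  continuous_toFun := continuous_of_discreteTopology
  zero_at_infty' := by
    rw [cocompact_eq_atTop]
    refine Tendsto.congr' ?_ tendsto_const_nhds
    filter_upwards [Filter.eventually_gt_atTop j] with k hk
    simp [Nat.not_le.mpr hk]

@[simp] lemma zsfn_apply (j k : ℕ) : zsfn j k = if k ≤ j then 1 else 0 := rfl

lemma znorm_le (f : ZeroAtInftyContinuousMap ℕ ℝ) {C : ℝ} (h0 : 0 ≤ C)
    (h : ∀ k, |f k| ≤ C) : ‖f‖ ≤ C := by
  rw [← ZeroAtInftyContinuousMap.norm_toBCF_eq_norm]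
  exact (BoundedContinuousFunction.norm_le h0).2 (by simpa using h)

lemma zabs_le (f : ZeroAtInftyContinuousMap ℕ ℝ) (k : ℕ) : |f k| ≤ ‖f‖ := by
  rw [← ZeroAtInftyContinuousMap.norm_toBCF_eq_norm]
  simpa using f.toBCF.norm_coe_le_norm k

noncomputable def zS (m : ℕ) : lp (fun _ : ℕ => ZeroAtInftyContinuousMap ℕ ℝ) ⊤ :=
  ⟨fun n => zsfn (n + m), memℓp_infty ⟨1, by
    rintro x ⟨n, rfl⟩
    exact znorm_le _ zero_le_one fun k => by dsimp; split <;> simp⟩⟩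

noncomputable def zU (m : ℕ) : lp (fun _ : ℕ => ZeroAtInftyContinuousMap ℕ ℝ) ⊤ :=
  ⟨fun _ => zem m, memℓp_infty ⟨1, by
    rintro x ⟨n, rfl⟩
    exact znorm_le _ zero_le_one fun k => by dsimp; split <;> simp⟩⟩

@[simp] lemma zS_apply (m n : ℕ) : (zS m : ∀ _ : ℕ, ZeroAtInftyContinuousMap ℕ ℝ) n = zsfn (n + m) := rfl
@[simp] lemma zU_apply (m n : ℕ) : (zU m : ∀ _ : ℕ, ZeroAtInftyContinuousMap ℕ ℝ) n = zem m := rfl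

/-- There is no Banach limit on `c₀`, the space of real null sequences (realized as the
zero-at-infinity continuous functions `C₀(ℕ, ℝ)` with the sup norm). -/
theorem stmt9 :
    ¬ ∃ T : lp (fun _ : ℕ => ZeroAtInftyContinuousMap ℕ ℝ) ⊤ →L[ℝ]
        ZeroAtInftyContinuousMap ℕ ℝ,
      ‖T‖ = 1 ∧
      (∀ f g : lp (fun _ : ℕ => ZeroAtInftyContinuousMap ℕ ℝ) ⊤,
        (∀ n, g n = f (n + 1)) → T g = T f) ∧
      (∀ (f : lp (fun _ : ℕ => ZeroAtInftyContinuousMap ℕ ℝ) ⊤)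
          (x : ZeroAtInftyContinuousMap ℕ ℝ),
        Tendsto (fun n => f n) atTop (𝓝 x) → T f = x) := by
  rintro ⟨T, hT1, hshift, hlim⟩
  set y : ZeroAtInftyContinuousMap ℕ ℝ := T (zS 0) with hy
  -- shift invariance iterated
  have hS : ∀ m, T (zS m) = y := by
    intro m
    induction m with
    | zero => rfl
    | succ m ih =>
      rw [← ih]
      refine hshift (zS m) (zS (m + 1)) fun n => ?_
      simp only [zS_apply]
      exact congrArg zsfn (by omega)
  -- T of the constant sequence
  have hU : ∀ m, T (zU m) = zem m := fun m =>
    hlim (zU m) (zem m) (by simp only [zU_apply]; exact tendsto_const_nhds)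
  -- the operator bound
  have hTle : ∀ f, ‖T f‖ ≤ ‖f‖ := fun f => by
    have h := T.le_opNorm f
    rw [hT1, one_mul] at h
    exact h
  -- y m = 1 for every m
  have hym : ∀ m, y m = 1 := by
    intro m
    have hA : ‖zS m‖ ≤ 1 :=
      lp.norm_le_of_forall_le zero_le_one fun n =>
        znorm_le _ zero_le_one fun k => by dsimp; split <;> simp
    have hD : ‖zS m - (2 : ℝ) • zU m‖ ≤ 1 := by
      refine lp.norm_le_of_forall_le zero_le_one fun n => ?_
      have hco : (zS m - (2 : ℝ) • zU m) n
          = zsfn (n + m) - (2 : ℝ) • zem m := by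
        rw [lp.coeFn_sub, lp.coeFn_smul, Pi.sub_apply, Pi.smul_apply, zS_apply, zU_apply]
      rw [hco]
      refine znorm_le _ zero_le_one fun k => ?_
      rw [ZeroAtInftyContinuousMap.sub_apply, ZeroAtInftyContinuousMap.smul_apply]
      by_cases hk : k = m
      · subst hk
        norm_num [Nat.le_add_left]
      · simp only [zsfn_apply, zem_apply, if_neg hk, smul_zero, sub_zero]
        split <;> simp
    have h1 : |y m| ≤ 1 := by
      rw [← hS m]
      exact le_trans (zabs_le _ m) (le_trans (hTle _) hA)
    have h2 : |y m - 2| ≤ 1 := by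
      have hTD : T (zS m - (2 : ℝ) • zU m) = y - (2 : ℝ) • zem m := by
        rw [T.map_sub, T.map_smul, hS m, hU m]
      have : (y - (2 : ℝ) • zem m) m = y m - 2 := by
        rw [ZeroAtInftyContinuousMap.sub_apply, ZeroAtInftyContinuousMap.smul_apply]
        simp
      rw [← this, ← hTD]
      exact le_trans (zabs_le _ m) (le_trans (hTle _) hD)
    rw [abs_le] at h1 h2
    linarith [h1.1, h1.2, h2.1, h2.2]
  -- contradiction with y vanishing at infinity
  have hz : Tendsto (fun m : ℕ => (1 : ℝ)) atTop (𝓝 0) := by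
    have := y.zero_at_infty'
    rw [cocompact_eq_atTop] at this
    exact this.congr hym
  have : (1 : ℝ) = 0 := tendsto_nhds_unique tendsto_const_nhds hz
  norm_num at this
end

section
/- Let X be a real normed space and let T : ℓ∞(X) → X be a shift-invariant continuous linear operator with ‖T‖ = 1. Then the following are equivalent: (i) there exist a surjective linear isometry S : X → X and a Banach limit φ on X with T = S ∘ φ; (ii) the map x ↦ T(𝐱), where 𝐱 denotes the constant sequence with value x, is surjective onto X and satisfies ‖T(𝐱)‖ = ‖x‖ for every x ∈ X. -/
open Filter Topology

/-- A Banach limit on a real normed space `X`: a norm-one, shift-invariant, continuous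
linear operator `ℓ∞(X) → X` extending the limit function on `c(X)`. -/
def IsBanachLimit {X : Type*} [NormedAddCommGroup X] [NormedSpace ℝ X]
    (T : lp (fun _ : ℕ => X) ⊤ →L[ℝ] X) : Prop :=
  ‖T‖ = 1 ∧
  (∀ f g : lp (fun _ : ℕ => X) ⊤, (∀ n, g n = f (n + 1)) → T g = T f) ∧
  (∀ (f : lp (fun _ : ℕ => X) ⊤) (x : X), Tendsto (fun n => f n) atTop (𝓝 x) → T f = x)

/-- The constant sequence `(x, x, x, …)` as an element of `ℓ∞(X)`. -/
def constSeq {X : Type*} [NormedAddCommGroup X] (x : X) : lp (fun _ : ℕ => X) ⊤ :=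
  ⟨fun _ => x, memℓp_infty ⟨‖x‖, by rintro r ⟨n, rfl⟩; simp⟩⟩

section Aux
variable {X : Type*} [NormedAddCommGroup X] [NormedSpace ℝ X]

def shiftK (k : ℕ) (f : lp (fun _ : ℕ => X) ⊤) : lp (fun _ : ℕ => X) ⊤ :=
  ⟨fun n => f (n + k), memℓp_infty ⟨‖f‖, by
    rintro r ⟨n, rfl⟩; exact lp.norm_apply_le_norm (by norm_num) f (n + k)⟩⟩

@[simp] lemma shiftK_apply (k n : ℕ) (f : lp (fun _ : ℕ => X) ⊤) :
    (shiftK k f) n = f (n + k) := rfl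

@[simp] lemma constSeq_apply (x : X) (n : ℕ) : (constSeq x) n = x := rfl

lemma T_shiftK (T : lp (fun _ : ℕ => X) ⊤ →L[ℝ] X)
    (hshift : ∀ f g : lp (fun _ : ℕ => X) ⊤, (∀ n, g n = f (n + 1)) → T g = T f)
    (k : ℕ) (f : lp (fun _ : ℕ => X) ⊤) : T (shiftK k f) = T f := by
  induction k with
  | zero => rfl
  | succ k ih =>
    rw [← ih]
    exact hshift (shiftK k f) (shiftK (k+1) f) (fun n => by simp [add_assoc, add_comm 1 k])

lemma T_zero_of_tendsto (T : lp (fun _ : ℕ => X) ⊤ →L[ℝ] X)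
    (hshift : ∀ f g : lp (fun _ : ℕ => X) ⊤, (∀ n, g n = f (n + 1)) → T g = T f)
    (hnorm : ‖T‖ = 1) (f : lp (fun _ : ℕ => X) ⊤)
    (hf : Tendsto (fun n => f n) atTop (𝓝 0)) : T f = 0 := by
  rw [← norm_le_zero_iff]
  refine le_of_forall_pos_le_add (fun ε hε => ?_)
  rw [zero_add]
  rw [Metric.tendsto_atTop] at hf
  obtain ⟨N, hN⟩ := hf (ε/2) (by positivity)
  have h1 : T f = T (shiftK N f) := (T_shiftK T hshift N f).symm
  have h2 : ‖shiftK N f‖ ≤ ε/2 := by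
    refine lp.norm_le_of_forall_le (by positivity) (fun n => ?_)
    simpa [dist_zero_right] using (hN (n + N) (by omega)).le
  calc ‖T f‖ = ‖T (shiftK N f)‖ := by rw [h1]
    _ ≤ ‖T‖ * ‖shiftK N f‖ := T.le_opNorm _
    _ ≤ 1 * (ε/2) := by rw [hnorm]; simpa using h2
    _ ≤ ε := by linarith

lemma T_limit (T : lp (fun _ : ℕ => X) ⊤ →L[ℝ] X)
    (hshift : ∀ f g : lp (fun _ : ℕ => X) ⊤, (∀ n, g n = f (n + 1)) → T g = T f)
    (hnorm : ‖T‖ = 1) (f : lp (fun _ : ℕ => X) ⊤) (x : X)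
    (hf : Tendsto (fun n => f n) atTop (𝓝 x)) : T f = T (constSeq x) := by
  have h : T (f - constSeq x) = 0 := by
    refine T_zero_of_tendsto T hshift hnorm _ ?_
    have : (fun n => (f - constSeq x) n) = fun n => f n - x := by
      ext n; simp [lp.coeFn_sub]
    rw [this]
    simpa using hf.sub_const x
  have := T.map_sub f (constSeq x)
  rw [h] at this
  exact sub_eq_zero.mp this.symm

lemma constSeq_tendsto (x : X) : Tendsto (fun n => (constSeq x : lp (fun _ : ℕ => X) ⊤) n) atTop (𝓝 x) :=
  tendsto_const_nhds

lemma constSeq_norm (x : X) : ‖(constSeq x : lp (fun _ : ℕ => X) ⊤)‖ = ‖x‖ := by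
  apply le_antisymm
  · exact lp.norm_le_of_forall_le (norm_nonneg x) (fun n => le_rfl)
  · exact lp.norm_apply_le_norm (by norm_num) (constSeq x) 0


end Aux

/-- Let `T : ℓ∞(X) → X` be a norm-one shift-invariant continuous linear operator. Then
`T = S ∘ φ` for some surjective linear isometry `S : X → X` and some Banach limit `φ` on
`X` if and only if `x ↦ T(𝐱)` is onto `X` and `‖T(𝐱)‖ = ‖x‖` for all `x ∈ X`. -/
theorem stmt11 (X : Type*) [NormedAddCommGroup X] [NormedSpace ℝ X]
    (T : lp (fun _ : ℕ => X) ⊤ →L[ℝ] X)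
    (hshift : ∀ f g : lp (fun _ : ℕ => X) ⊤, (∀ n, g n = f (n + 1)) → T g = T f)
    (hnorm : ‖T‖ = 1) :
    (∃ (S : X →ₗᵢ[ℝ] X) (φ : lp (fun _ : ℕ => X) ⊤ →L[ℝ] X),
        Function.Surjective S ∧ IsBanachLimit φ ∧ ∀ f, T f = S (φ f)) ↔
      (Function.Surjective (fun x : X => T (constSeq x)) ∧
        ∀ x : X, ‖T (constSeq x)‖ = ‖x‖) := by
  
  constructor
  · rintro ⟨S, φ, hS, ⟨_, _, hlim⟩, hT⟩
    have key : ∀ x : X, T (constSeq x) = S x := fun x => by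
      rw [hT, hlim (constSeq x) x (constSeq_tendsto x)]
    constructor
    · intro y
      obtain ⟨x, hx⟩ := hS y
      exact ⟨x, by simpa [key x] using hx⟩
    · intro x; rw [key x, S.norm_map]
  · rintro ⟨hsurj, hiso⟩
    -- the map x ↦ T (constSeq x) as a linear isometry
    have hadd : ∀ x y : X, (constSeq (x + y) : lp (fun _ : ℕ => X) ⊤)
        = constSeq x + constSeq y := fun x y =>
      Subtype.ext (funext fun n => by rw [lp.coeFn_add]; rfl)
    have hsmul : ∀ (c : ℝ) (x : X), (constSeq (c • x) : lp (fun _ : ℕ => X) ⊤)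
        = c • constSeq x := fun c x =>
      Subtype.ext (funext fun n => by rw [lp.coeFn_smul]; rfl)
    set S : X →ₗᵢ[ℝ] X :=
      { toFun := fun x => T (constSeq x)
        map_add' := fun x y => by show T (constSeq (x+y)) = _; rw [hadd, map_add]
        map_smul' := fun c x => by show T (constSeq (c • x)) = _; rw [hsmul, map_smul]; rfl
        norm_map' := hiso } with hSdef
    have hSsurj : Function.Surjective S := hsurj
    set E : X ≃ₗᵢ[ℝ] X := LinearIsometryEquiv.ofSurjective S hSsurj with hEdef
    have hE : ∀ x, E x = T (constSeq x) := fun x => by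
      rw [hEdef, LinearIsometryEquiv.coe_ofSurjective]; rfl
    set φ : lp (fun _ : ℕ => X) ⊤ →L[ℝ] X :=
      (E.symm.toLinearIsometry.toContinuousLinearMap).comp T with hφdef
    have hφ : ∀ f, φ f = E.symm (T f) := fun f => rfl
    have hTφ : ∀ f, T f = E (φ f) := fun f => by rw [hφ, E.apply_symm_apply]
    have hφnorm : ∀ f, ‖φ f‖ = ‖T f‖ := fun f => by
      rw [hφ]; exact E.symm.norm_map _
    refine ⟨E.toLinearIsometry, φ, E.surjective, ⟨?_, ?_, ?_⟩, fun f => hTφ f⟩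
    · apply le_antisymm
      · refine ContinuousLinearMap.opNorm_le_bound _ zero_le_one (fun f => ?_)
        rw [hφnorm, one_mul]
        calc ‖T f‖ ≤ ‖T‖ * ‖f‖ := T.le_opNorm f
          _ = ‖f‖ := by rw [hnorm, one_mul]
      · rw [← hnorm]
        refine ContinuousLinearMap.opNorm_le_bound _ (norm_nonneg φ) (fun f => ?_)
        rw [← hφnorm]; exact φ.le_opNorm f
    · intro f g hfg
      simp only [hφ]
      rw [hshift f g hfg]
    · intro f x hf
      rw [hφ, T_limit T hshift hnorm f x hf, ← hE, E.symm_apply_apply]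
end

section
/- Let X be a real normed space admitting a Banach limit and having the Bade property, i.e., the closed unit ball of X equals the closed convex hull of its set of extreme points. Then the set BL(X) of Banach limits on X is a face of the closed unit ball of the space of shift-invariant continuous linear operators ℓ∞(X) → X: if φ and ψ are shift-invariant continuous linear operators from ℓ∞(X) to X with ‖φ‖ ≤ 1 and ‖ψ‖ ≤ 1, and α ∈ (0,1) is such that α·φ + (1−α)·ψ is a Banach limit on X, then both φ and ψ are Banach limits on X. -/
open Filter Topology

set_option linter.unusedSectionVars false

namespace Stmt12Aux

variable {X : Type*} [NormedAddCommGroup X] [NormedSpace ℝ X]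

/-- Constant sequence in `ℓ∞(X)`. -/
noncomputable def constSeq (x : X) : lp (fun _ : ℕ => X) ⊤ :=
  ⟨fun _ => x, memℓp_infty ⟨‖x‖, by rintro r ⟨i, rfl⟩; simp⟩⟩

@[simp] lemma constSeq_apply (x : X) (n : ℕ) : constSeq x n = x := rfl

lemma norm_constSeq_le (x : X) : ‖constSeq x‖ ≤ ‖x‖ :=
  lp.norm_le_of_forall_le (norm_nonneg x) fun n => by simp

/-- Shift of a sequence by `k`. -/
noncomputable def shiftSeq (f : lp (fun _ : ℕ => X) ⊤) (k : ℕ) : lp (fun _ : ℕ => X) ⊤ :=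
  ⟨fun n => f (n + k), memℓp_infty ⟨‖f‖, by
    rintro r ⟨i, rfl⟩; exact lp.norm_apply_le_norm ENNReal.top_ne_zero f (i + k)⟩⟩

@[simp] lemma shiftSeq_apply (f : lp (fun _ : ℕ => X) ⊤) (k n : ℕ) :
    shiftSeq f k n = f (n + k) := rfl

lemma lp_ext {f g : lp (fun _ : ℕ => X) ⊤} (h : ∀ n, f n = g n) : f = g :=
  Subtype.ext (funext h)

lemma shift_eq (χ : lp (fun _ : ℕ => X) ⊤ →L[ℝ] X)
    (hshift : ∀ f g : lp (fun _ : ℕ => X) ⊤, (∀ n, g n = f (n + 1)) → χ g = χ f)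
    (f : lp (fun _ : ℕ => X) ⊤) : ∀ k, χ (shiftSeq f k) = χ f
  | 0 => by
      have h0 : shiftSeq f 0 = f := lp_ext fun n => by simp
      rw [h0]
  | (k + 1) => by
      have h1 : χ (shiftSeq f (k + 1)) = χ (shiftSeq f k) := by
        refine hshift (shiftSeq f k) (shiftSeq f (k + 1)) fun n => ?_
        show f (n + (k + 1)) = f (n + 1 + k)
        have h2 : n + (k + 1) = n + 1 + k := by omega
        rw [h2]
      rw [h1, shift_eq χ hshift f k]

lemma constSeq_smul (a : ℝ) (x : X) : constSeq (a • x) = a • constSeq x :=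
  lp_ext fun n => by rw [lp.coeFn_smul]; simp

lemma constSeq_sub (x y : X) : constSeq (x - y) = constSeq x - constSeq y :=
  lp_ext fun n => by rw [lp.coeFn_sub]; simp

lemma constSeq_add (x y : X) : constSeq (x + y) = constSeq x + constSeq y :=
  lp_ext fun n => by rw [lp.coeFn_add]; simp

/-- If a norm-at-most-one operator agrees with the identity on constant sequences at
extreme points of the unit ball, and `X` has the Bade property, it agrees on all
constant sequences. -/
lemma const_eq_of_extreme
    (hBade : Metric.closedBall (0 : X) 1 =
      closure (convexHull ℝ (Set.extremePoints ℝ (Metric.closedBall (0 : X) 1))))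
    (χ : lp (fun _ : ℕ => X) ⊤ →L[ℝ] X)
    (hext : ∀ e ∈ Set.extremePoints ℝ (Metric.closedBall (0 : X) 1),
      χ (constSeq e) = e) :
    ∀ x : X, χ (constSeq x) = x := by
  set s : Set X := {x : X | χ (constSeq x) = x} with hs
  have hcont : Continuous fun x : X => χ (constSeq x) := by
    have hlip : LipschitzWith 1 fun x : X => constSeq x := by
      refine LipschitzWith.of_dist_le_mul fun x y => ?_
      rw [NNReal.coe_one, one_mul, dist_eq_norm, dist_eq_norm, ← constSeq_sub]
      exact norm_constSeq_le _
    exact χ.continuous.comp hlip.continuous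
  have hclosed : IsClosed s := isClosed_eq hcont continuous_id
  have hconv : Convex ℝ s := by
    intro x hx y hy a b ha hb hab
    show χ (constSeq (a • x + b • y)) = a • x + b • y
    rw [constSeq_add, constSeq_smul, constSeq_smul, map_add, map_smul, map_smul, hx, hy]
  have hball : Metric.closedBall (0 : X) 1 ⊆ s := by
    rw [hBade]
    exact closure_minimal (convexHull_min hext hconv) hclosed
  intro x
  rcases eq_or_ne x 0 with rfl | hx
  · have h0 : constSeq (0 : X) = 0 := lp_ext fun n => by simp
    rw [h0, map_zero]
  · have hu : (‖x‖⁻¹ • x) ∈ Metric.closedBall (0 : X) 1 := by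
      rw [mem_closedBall_zero_iff, norm_smul, norm_inv, norm_norm,
        inv_mul_cancel₀ (norm_ne_zero_iff.mpr hx)]
    have hu' : χ (constSeq (‖x‖⁻¹ • x)) = ‖x‖⁻¹ • x := hball hu
    have hxe : x = ‖x‖ • (‖x‖⁻¹ • x) := (smul_inv_smul₀ (norm_ne_zero_iff.mpr hx) x).symm
    calc χ (constSeq x) = χ (constSeq (‖x‖ • (‖x‖⁻¹ • x))) := by rw [← hxe]
      _ = ‖x‖ • χ (constSeq (‖x‖⁻¹ • x)) := by rw [constSeq_smul, map_smul]
      _ = ‖x‖ • (‖x‖⁻¹ • x) := by rw [hu']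
      _ = x := by rw [← hxe]

/-- A shift-invariant operator of norm at most one that fixes all constant sequences is a
Banach limit (when `X` is nontrivial). -/
lemma isBanachLimit_of [Nontrivial X] (χ : lp (fun _ : ℕ => X) ⊤ →L[ℝ] X)
    (hshift : ∀ f g : lp (fun _ : ℕ => X) ⊤, (∀ n, g n = f (n + 1)) → χ g = χ f)
    (hnorm : ‖χ‖ ≤ 1)
    (hconst : ∀ x : X, χ (constSeq x) = x) : IsBanachLimit χ := by
  refine ⟨le_antisymm hnorm ?_, hshift, ?_⟩
  · obtain ⟨x, hx⟩ := exists_ne (0 : X)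
    have h1 : ‖‖x‖⁻¹ • x‖ = 1 := by
      rw [norm_smul, norm_inv, norm_norm, inv_mul_cancel₀ (norm_ne_zero_iff.mpr hx)]
    calc (1 : ℝ) = ‖χ (constSeq (‖x‖⁻¹ • x))‖ := by rw [hconst, h1]
      _ ≤ ‖χ‖ * ‖constSeq (‖x‖⁻¹ • x)‖ := χ.le_opNorm _
      _ ≤ ‖χ‖ * 1 := by
          refine mul_le_mul_of_nonneg_left ?_ (norm_nonneg χ)
          exact (norm_constSeq_le _).trans h1.le
      _ = ‖χ‖ := mul_one _
  · intro f x hlim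
    refine eq_of_forall_dist_le fun ε hε => ?_
    obtain ⟨N, hN⟩ := (Metric.tendsto_atTop.mp hlim) ε hε
    have hdiff : ‖shiftSeq f N - constSeq x‖ ≤ ε := by
      refine lp.norm_le_of_forall_le hε.le fun n => ?_
      rw [lp.coeFn_sub]
      simp only [Pi.sub_apply, shiftSeq_apply, constSeq_apply]
      rw [← dist_eq_norm]
      exact (hN (n + N) (Nat.le_add_left N n)).le
    calc dist (χ f) x = ‖χ f - x‖ := dist_eq_norm _ _
      _ = ‖χ (shiftSeq f N) - χ (constSeq x)‖ := by
          rw [shift_eq χ hshift f N, hconst]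
      _ = ‖χ (shiftSeq f N - constSeq x)‖ := by rw [map_sub]
      _ ≤ ‖χ‖ * ‖shiftSeq f N - constSeq x‖ := χ.le_opNorm _
      _ ≤ 1 * ε := mul_le_mul hnorm hdiff (norm_nonneg _) zero_le_one
      _ = ε := one_mul ε

end Stmt12Aux

/-- If `X` admits a Banach limit and has the Bade property (its closed unit ball is the
closed convex hull of its extreme points), then the set of Banach limits on `X` is a face
of the closed unit ball of the space of shift-invariant continuous linear operators
`ℓ∞(X) → X`. -/
theorem stmt12 (X : Type*) [NormedAddCommGroup X] [NormedSpace ℝ X]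
    (hBL : ∃ φ₀ : lp (fun _ : ℕ => X) ⊤ →L[ℝ] X, IsBanachLimit φ₀)
    (hBade : Metric.closedBall (0 : X) 1 =
      closure (convexHull ℝ (Set.extremePoints ℝ (Metric.closedBall (0 : X) 1))))
    (φ ψ : lp (fun _ : ℕ => X) ⊤ →L[ℝ] X)
    (hφshift : ∀ f g : lp (fun _ : ℕ => X) ⊤, (∀ n, g n = f (n + 1)) → φ g = φ f)
    (hψshift : ∀ f g : lp (fun _ : ℕ => X) ⊤, (∀ n, g n = f (n + 1)) → ψ g = ψ f)
    (hφnorm : ‖φ‖ ≤ 1) (hψnorm : ‖ψ‖ ≤ 1)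
    (α : ℝ) (hα : α ∈ Set.Ioo (0 : ℝ) 1)
    (hconv : IsBanachLimit (α • φ + (1 - α) • ψ)) :
    IsBanachLimit φ ∧ IsBanachLimit ψ := by
  open Stmt12Aux in
  rcases subsingleton_or_nontrivial X with hS | hNT
  · exfalso
    have hT0 : (α • φ + (1 - α) • ψ) = 0 := by
      ext f
      exact Subsingleton.elim _ _
    have := hconv.1
    rw [hT0, norm_zero] at this
    exact zero_ne_one this
  · -- extreme points are fixed by both φ and ψ on constant sequences
    have hext : ∀ e ∈ Set.extremePoints ℝ (Metric.closedBall (0 : X) 1),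
        φ (Stmt12Aux.constSeq e) = e ∧ ψ (Stmt12Aux.constSeq e) = e := by
      intro e he
      have hTe : α • φ (Stmt12Aux.constSeq e) + (1 - α) • ψ (Stmt12Aux.constSeq e) = e := by
        have h := hconv.2.2 (Stmt12Aux.constSeq e) e (by
          have : (fun n => (Stmt12Aux.constSeq e) n) = fun _ : ℕ => e := by
            funext n; simp
          rw [this]
          exact tendsto_const_nhds)
        simpa using h
      have hce : ‖Stmt12Aux.constSeq e‖ ≤ 1 :=
        (Stmt12Aux.norm_constSeq_le e).trans (mem_closedBall_zero_iff.mp he.1)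
      have hφmem : φ (Stmt12Aux.constSeq e) ∈ Metric.closedBall (0 : X) 1 := by
        rw [mem_closedBall_zero_iff]
        calc ‖φ (Stmt12Aux.constSeq e)‖ ≤ ‖φ‖ * ‖Stmt12Aux.constSeq e‖ := φ.le_opNorm _
          _ ≤ 1 * 1 := mul_le_mul hφnorm hce (norm_nonneg _) zero_le_one
          _ = 1 := one_mul 1
      have hψmem : ψ (Stmt12Aux.constSeq e) ∈ Metric.closedBall (0 : X) 1 := by
        rw [mem_closedBall_zero_iff]
        calc ‖ψ (Stmt12Aux.constSeq e)‖ ≤ ‖ψ‖ * ‖Stmt12Aux.constSeq e‖ := ψ.le_opNorm _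
          _ ≤ 1 * 1 := mul_le_mul hψnorm hce (norm_nonneg _) zero_le_one
          _ = 1 := one_mul 1
      have hseg : e ∈ openSegment ℝ (φ (Stmt12Aux.constSeq e)) (ψ (Stmt12Aux.constSeq e)) :=
        ⟨α, 1 - α, hα.1, by linarith [hα.2], by ring, hTe⟩
      exact ⟨he.2 hφmem hψmem hseg, he.2 hψmem hφmem (by rw [openSegment_symm]; exact hseg)⟩
    have hφconst : ∀ x : X, φ (Stmt12Aux.constSeq x) = x :=
      Stmt12Aux.const_eq_of_extreme hBade φ fun e he => (hext e he).1
    have hψconst : ∀ x : X, ψ (Stmt12Aux.constSeq x) = x :=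
      Stmt12Aux.const_eq_of_extreme hBade ψ fun e he => (hext e he).2
    exact ⟨Stmt12Aux.isBanachLimit_of φ hφshift hφnorm hφconst,
      Stmt12Aux.isBanachLimit_of ψ hψshift hψnorm hψconst⟩
end

section
/- If a sequence (x_n)_{n∈ℕ} in a real normed space X is weakly almost convergent to some y ∈ X, then (x_n) is bounded: sup_n ‖x_n‖ < ∞. -/
open Filter Topology

/-- A sequence `x` in a real normed space is almost convergent to `y` if the means
`(1/(p+1)) ∑_{k=0}^{p} x (n+k)` converge to `y` as `p → ∞`, uniformly in `n`. -/
def AlmostConvergentTo {E : Type*} [NormedAddCommGroup E] [NormedSpace ℝ E]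
    (x : ℕ → E) (y : E) : Prop :=
  TendstoUniformly
    (fun (p n : ℕ) => ((p : ℝ) + 1)⁻¹ • ∑ k ∈ Finset.range (p + 1), x (n + k))
    (fun _ => y) atTop

lemma AlmostConvergentTo.bounded {E : Type*} [NormedAddCommGroup E] [NormedSpace ℝ E]
    {x : ℕ → E} {y : E} (h : AlmostConvergentTo x y) : ∃ C : ℝ, ∀ n, ‖x n‖ ≤ C := by
  rw [AlmostConvergentTo, Metric.tendstoUniformly_iff] at h
  obtain ⟨p, hp⟩ := eventually_atTop.mp (h 1 one_pos)
  set A : ℕ → ℕ → E := fun q n => ((q : ℝ) + 1)⁻¹ • ∑ k ∈ Finset.range (q + 1), x (n + k)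
    with hA
  have hS : ∀ (q : ℕ) (n : ℕ), ((q : ℝ) + 1) • A q n = ∑ k ∈ Finset.range (q + 1), x (n + k) := by
    intro q n
    rw [hA]
    simp only
    rw [smul_smul, mul_inv_cancel₀ (by positivity), one_smul]
  have hbnd : ∀ q ≥ p, ∀ n, ‖A q n‖ ≤ ‖y‖ + 1 := by
    intro q hq n
    have hd := hp q hq n
    have : A q n = y + (A q n - y) := by abel
    rw [this]
    have : ‖A q n - y‖ ≤ 1 := by
      rw [dist_eq_norm, ← norm_neg] at hd
      simp only [neg_sub] at hd
      linarith
    calc ‖y + (A q n - y)‖ ≤ ‖y‖ + ‖A q n - y‖ := norm_add_le _ _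
      _ ≤ ‖y‖ + 1 := by linarith
  refine ⟨((p + 2 : ℕ) : ℝ) * (‖y‖ + 1) + ((p + 3 : ℕ) : ℝ) * (‖y‖ + 1) + ‖y‖ + 1 + ‖y‖ + 1,
    fun n => ?_⟩
  have key : x n = (((p + 2 : ℕ) : ℝ) + 1) • A (p + 2) n
      - (((p + 1 : ℕ) : ℝ) + 1) • A (p + 1) (n + 1) := by
    rw [hS, hS]
    rw [Finset.sum_range_succ' (fun k => x (n + k)) (p + 2)]
    simp only [add_zero]
    have he : ∀ k, x (n + (k + 1)) = x (n + 1 + k) := by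
      intro k
      congr 1
      omega
    rw [show p + 2 = p + 1 + 1 from rfl]
    simp only [he]
    abel
  clear_value A
  rw [key]
  have h1 := hbnd (p + 2) (by omega) n
  have h2 := hbnd (p + 1) (by omega) (n + 1)
  calc ‖(((p + 2 : ℕ) : ℝ) + 1) • A (p + 2) n - (((p + 1 : ℕ) : ℝ) + 1) • A (p + 1) (n + 1)‖
      ≤ ‖(((p + 2 : ℕ) : ℝ) + 1) • A (p + 2) n‖ + ‖(((p + 1 : ℕ) : ℝ) + 1) • A (p + 1) (n + 1)‖ :=
        norm_sub_le _ _
    _ = (((p + 2 : ℕ) : ℝ) + 1) * ‖A (p + 2) n‖ + (((p + 1 : ℕ) : ℝ) + 1) * ‖A (p + 1) (n + 1)‖ := by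
        have e1 : ‖(((p + 2 : ℕ) : ℝ) + 1)‖ = ((p + 2 : ℕ) : ℝ) + 1 := by
          rw [Real.norm_eq_abs, abs_of_pos (by positivity)]
        have e2 : ‖(((p + 1 : ℕ) : ℝ) + 1)‖ = ((p + 1 : ℕ) : ℝ) + 1 := by
          rw [Real.norm_eq_abs, abs_of_pos (by positivity)]
        rw [norm_smul, norm_smul, e1, e2]
    _ ≤ (((p + 2 : ℕ) : ℝ) + 1) * (‖y‖ + 1) + (((p + 1 : ℕ) : ℝ) + 1) * (‖y‖ + 1) := by
        have hp2 : (0:ℝ) ≤ ((p + 2 : ℕ) : ℝ) + 1 := by positivity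
        have hp1 : (0:ℝ) ≤ ((p + 1 : ℕ) : ℝ) + 1 := by positivity
        gcongr
    _ ≤ ((p + 2 : ℕ) : ℝ) * (‖y‖ + 1) + ((p + 3 : ℕ) : ℝ) * (‖y‖ + 1) + ‖y‖ + 1 + ‖y‖ + 1 := by
        push_cast
        nlinarith [norm_nonneg y]

/-- A weakly almost convergent sequence in a real normed space is bounded. -/
theorem stmt13 (X : Type*) [NormedAddCommGroup X] [NormedSpace ℝ X]
    (x : ℕ → X) (y : X)
    (h : ∀ f : X →L[ℝ] ℝ, AlmostConvergentTo (fun n => f (x n)) (f y)) :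
    ∃ C : ℝ, ∀ n, ‖x n‖ ≤ C := by
  set g : ℕ → StrongDual ℝ X →L[ℝ] ℝ :=
    fun n => NormedSpace.inclusionInDoubleDual ℝ X (x n) with hg
  have hb : ∀ f : StrongDual ℝ X, ∃ C : ℝ, ∀ n, ‖g n f‖ ≤ C := by
    intro f
    obtain ⟨C, hC⟩ := (h f).bounded
    exact ⟨C, fun n => hC n⟩
  obtain ⟨C', hC'⟩ := banach_steinhaus hb
  refine ⟨C', fun n => ?_⟩
  have : ‖g n‖ = ‖x n‖ :=
    (NormedSpace.inclusionInDoubleDualLi ℝ (E := X)).norm_map (x n)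
  rw [← this]
  exact hC' n
end

section
/- Let (x_n)_{n∈ℕ} be a Cauchy sequence in a real normed space X. Then (x_n) is convergent if and only if it is almost convergent; moreover, in that case the limit of (x_n) coincides with its almost limit. -/
open Filter Topology

lemma mean_sub {E : Type*} [NormedAddCommGroup E] [NormedSpace ℝ E]
    (x : ℕ → E) (l : E) (p n : ℕ) :
    ((p : ℝ) + 1)⁻¹ • ∑ k ∈ Finset.range (p + 1), x (n + k) - l
      = ((p : ℝ) + 1)⁻¹ • ∑ k ∈ Finset.range (p + 1), (x (n + k) - l) := by
  have hp : ((p : ℝ) + 1) ≠ 0 := by positivity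
  rw [Finset.sum_sub_distrib, smul_sub, Finset.sum_const, Finset.card_range]
  congr 1
  rw [← Nat.cast_smul_eq_nsmul ℝ, smul_smul]
  push_cast
  rw [inv_mul_cancel₀ hp, one_smul]

lemma lemA {E : Type*} [NormedAddCommGroup E] [NormedSpace ℝ E]
    {x : ℕ → E} {l : E} (h : Tendsto x atTop (𝓝 l)) : AlmostConvergentTo x l := by
  rw [AlmostConvergentTo, Metric.tendstoUniformly_iff]
  intro ε hε
  have htd : Tendsto (fun m => ‖x m - l‖) atTop (𝓝 0) := by
    have := (h.sub (tendsto_const_nhds (x := l))).norm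
    simpa using this
  obtain ⟨C, hC⟩ : ∃ C, ∀ m, ‖x m - l‖ ≤ C := by
    obtain ⟨C, hC⟩ := htd.bddAbove_range
    exact ⟨C, fun m => hC ⟨m, rfl⟩⟩
  have hC0 : 0 ≤ C := le_trans (norm_nonneg _) (hC 0)
  obtain ⟨N, hN⟩ : ∃ N, ∀ m ≥ N, ‖x m - l‖ < ε / 4 := by
    have := (Metric.tendsto_atTop.1 htd) (ε / 4) (by positivity)
    simpa [Real.dist_eq, abs_of_nonneg (norm_nonneg _)] using this
  obtain ⟨P, hP⟩ := exists_nat_gt (4 * (N * C) / ε)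
  filter_upwards [eventually_ge_atTop P] with p hp n
  have hp1 : (0:ℝ) < (p : ℝ) + 1 := by positivity
  have hinv : (0:ℝ) < ((p : ℝ) + 1)⁻¹ := inv_pos.2 hp1
  have hNC : (N : ℝ) * C < ε / 4 * ((p : ℝ) + 1) := by
    have hpP : (P : ℝ) ≤ (p : ℝ) := Nat.cast_le.2 hp
    have h1 : 4 * ((N:ℝ) * C) / ε < (p:ℝ) + 1 := by linarith
    have := (div_lt_iff₀ hε).1 h1
    linarith
  have key : ‖(((p : ℝ) + 1)⁻¹ • ∑ k ∈ Finset.range (p + 1), x (n + k)) - l‖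
      ≤ ((p : ℝ) + 1)⁻¹ * ∑ k ∈ Finset.range (p + 1), ‖x (n + k) - l‖ := by
    rw [mean_sub, norm_smul, Real.norm_eq_abs, abs_of_pos hinv]
    gcongr
    exact norm_sum_le _ _
  have hite : ∑ k ∈ Finset.range (p + 1), (if k < N then C else 0) ≤ (N : ℝ) * C := by
    classical
    rw [Finset.sum_ite, Finset.sum_const, Finset.sum_const, smul_zero, add_zero,
      nsmul_eq_mul]
    have hcard : ((Finset.range (p + 1)).filter (· < N)).card ≤ N := by
      have hsub : (Finset.range (p + 1)).filter (· < N) ⊆ Finset.range N := by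
        intro k hk
        simp only [Finset.mem_filter, Finset.mem_range] at hk ⊢
        exact hk.2
      simpa using Finset.card_le_card hsub
    exact mul_le_mul_of_nonneg_right (by exact_mod_cast hcard) hC0
  have sum_le : ∑ k ∈ Finset.range (p + 1), ‖x (n + k) - l‖
      ≤ (N : ℝ) * C + ((p : ℝ) + 1) * (ε / 4) := by
    have step : ∑ k ∈ Finset.range (p + 1), ‖x (n + k) - l‖
        ≤ ∑ k ∈ Finset.range (p + 1), ((if k < N then C else 0) + ε / 4) := by
      apply Finset.sum_le_sum
      intro k _
      by_cases hk : k < N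
      · simp only [hk, if_true]
        have := hC (n + k)
        linarith
      · simp only [hk, if_false, zero_add]
        exact le_of_lt (hN (n + k) (le_trans (not_lt.1 hk) (Nat.le_add_left k n)))
    have expand : ∑ k ∈ Finset.range (p + 1), ((if k < N then C else 0) + ε / 4)
        = (∑ k ∈ Finset.range (p + 1), (if k < N then C else 0)) + ((p : ℝ) + 1) * (ε / 4) := by
      rw [Finset.sum_add_distrib, Finset.sum_const, Finset.card_range, nsmul_eq_mul]
      push_cast
      ring
    rw [expand] at step
    linarith
  rw [dist_comm, dist_eq_norm]
  have h2 : ((p : ℝ) + 1)⁻¹ * ∑ k ∈ Finset.range (p + 1), ‖x (n + k) - l‖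
      ≤ ((p : ℝ) + 1)⁻¹ * ((N : ℝ) * C + ((p : ℝ) + 1) * (ε / 4)) :=
    mul_le_mul_of_nonneg_left sum_le hinv.le
  have h3 : ((p : ℝ) + 1)⁻¹ * ((N : ℝ) * C + ((p : ℝ) + 1) * (ε / 4)) < ε := by
    have hmul : ((p : ℝ) + 1)⁻¹ * ((p : ℝ) + 1) = 1 := inv_mul_cancel₀ hp1.ne'
    nlinarith [mul_lt_mul_of_pos_left hNC hinv, hmul, hinv, hε]
  exact lt_of_le_of_lt (le_trans key h2) h3

lemma lemB {E : Type*} [NormedAddCommGroup E] [NormedSpace ℝ E]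
    {x : ℕ → E} {y : E} (hx : CauchySeq x) (hy : AlmostConvergentTo x y) :
    Tendsto x atTop (𝓝 y) := by
  rw [Metric.tendsto_atTop]
  intro ε hε
  obtain ⟨N, hN⟩ := Metric.cauchySeq_iff.1 hx (ε / 3) (by positivity)
  obtain ⟨p, hp⟩ := (Metric.tendstoUniformly_iff.1 hy (ε / 3) (by positivity)).exists
  refine ⟨N, fun n hn => ?_⟩
  have hp1 : (0:ℝ) < (p : ℝ) + 1 := by positivity
  have hinv : (0:ℝ) < ((p : ℝ) + 1)⁻¹ := inv_pos.2 hp1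
  have h1 : dist (((p : ℝ) + 1)⁻¹ • ∑ k ∈ Finset.range (p + 1), x (n + k)) (x n) ≤ ε / 3 := by
    rw [dist_eq_norm, mean_sub, norm_smul, Real.norm_eq_abs, abs_of_pos hinv]
    have hsum : ∑ k ∈ Finset.range (p + 1), ‖x (n + k) - x n‖ ≤ ((p : ℝ) + 1) * (ε / 3) := by
      calc ∑ k ∈ Finset.range (p + 1), ‖x (n + k) - x n‖
          ≤ ∑ _k ∈ Finset.range (p + 1), (ε / 3) := by
            apply Finset.sum_le_sum
            intro k _
            have := hN (n + k) (le_trans hn (Nat.le_add_right n k)) n hn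
            rw [dist_eq_norm] at this
            exact this.le
        _ = ((p : ℝ) + 1) * (ε / 3) := by
            rw [Finset.sum_const, Finset.card_range, nsmul_eq_mul]; push_cast; ring
    have hns : ‖∑ k ∈ Finset.range (p + 1), (x (n + k) - x n)‖ ≤ ((p : ℝ) + 1) * (ε / 3) :=
      le_trans (norm_sum_le _ _) hsum
    calc ((p : ℝ) + 1)⁻¹ * ‖∑ k ∈ Finset.range (p + 1), (x (n + k) - x n)‖
        ≤ ((p : ℝ) + 1)⁻¹ * (((p : ℝ) + 1) * (ε / 3)) :=
          mul_le_mul_of_nonneg_left hns hinv.le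
      _ = ε / 3 := by field_simp
  have h2 : dist y (((p : ℝ) + 1)⁻¹ • ∑ k ∈ Finset.range (p + 1), x (n + k)) < ε / 3 := hp n
  calc dist (x n) y ≤ dist (x n) (((p : ℝ) + 1)⁻¹ • ∑ k ∈ Finset.range (p + 1), x (n + k))
        + dist (((p : ℝ) + 1)⁻¹ • ∑ k ∈ Finset.range (p + 1), x (n + k)) y := dist_triangle _ _ _
    _ < ε := by rw [dist_comm (x n), dist_comm _ y]; linarith

/-- For a Cauchy sequence in a real normed space, convergence and almost convergence are
equivalent, and in that case the limit coincides with the almost limit. -/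
theorem stmt14 (X : Type*) [NormedAddCommGroup X] [NormedSpace ℝ X]
    (x : ℕ → X) (hx : CauchySeq x) :
    ((∃ l : X, Tendsto x atTop (𝓝 l)) ↔ (∃ y : X, AlmostConvergentTo x y)) ∧
    (∀ l y : X, Tendsto x atTop (𝓝 l) → AlmostConvergentTo x y → l = y) := by
  refine ⟨⟨fun ⟨l, hl⟩ => ⟨l, lemA hl⟩, fun ⟨y, hy⟩ => ⟨y, lemB hx hy⟩⟩, ?_⟩
  intro l y hl hy
  exact tendsto_nhds_unique (TendstoUniformly.tendsto_at (lemA hl) 0)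
    (TendstoUniformly.tendsto_at hy 0)
end

section
/- Let X be a real normed space and let ac(X) := {(x_n) ∈ ℓ∞(X) : (x_n) is almost convergent to some y ∈ X}. Then ac(X) is a closed subspace of ℓ∞(X) if and only if X is complete. -/
open Filter Topology

section Aux

variable {E : Type*} [NormedAddCommGroup E] [NormedSpace ℝ E]

noncomputable def acMean (x : ℕ → E) (p n : ℕ) : E :=
  ((p : ℝ) + 1)⁻¹ • ∑ k ∈ Finset.range (p + 1), x (n + k)

lemma acMean_const (c : E) (p n : ℕ) : acMean (fun _ => c) p n = c := by
  have h : ((p : ℝ) + 1)⁻¹ • ((p + 1 : ℕ) • c) = c := by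
    rw [← Nat.cast_smul_eq_nsmul ℝ, smul_smul]
    push_cast
    rw [inv_mul_cancel₀ (by positivity), one_smul]
  simpa [acMean, Finset.sum_const] using h

lemma norm_acMean_sub_acMean_le {x x' : ℕ → E} {C : ℝ} {p n : ℕ}
    (h : ∀ k ∈ Finset.range (p + 1), ‖x (n + k) - x' (n + k)‖ ≤ C) :
    ‖acMean x p n - acMean x' p n‖ ≤ C := by
  have hpos : (0 : ℝ) < (p : ℝ) + 1 := by positivity
  have : acMean x p n - acMean x' p n
      = ((p : ℝ) + 1)⁻¹ • ∑ k ∈ Finset.range (p + 1), (x (n + k) - x' (n + k)) := by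
    simp [acMean, Finset.sum_sub_distrib, smul_sub]
  rw [this, norm_smul]
  have hsum : ‖∑ k ∈ Finset.range (p + 1), (x (n + k) - x' (n + k))‖ ≤ (p + 1 : ℝ) * C := by
    calc ‖∑ k ∈ Finset.range (p + 1), (x (n + k) - x' (n + k))‖
        ≤ ∑ k ∈ Finset.range (p + 1), ‖x (n + k) - x' (n + k)‖ := norm_sum_le _ _
      _ ≤ ∑ _k ∈ Finset.range (p + 1), C := Finset.sum_le_sum h
      _ = (p + 1 : ℝ) * C := by rw [Finset.sum_const, Finset.card_range, nsmul_eq_mul]; push_cast; ring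
  rw [Real.norm_eq_abs, abs_of_pos (show (0:ℝ) < ((p : ℝ) + 1)⁻¹ by positivity)]
  calc ((p : ℝ) + 1)⁻¹ * ‖∑ k ∈ Finset.range (p + 1), (x (n + k) - x' (n + k))‖
      ≤ ((p : ℝ) + 1)⁻¹ * ((p + 1 : ℝ) * C) :=
        mul_le_mul_of_nonneg_left hsum (by positivity)
    _ = C := by field_simp

lemma almostConvergentTo_iff (x : ℕ → E) (y : E) :
    AlmostConvergentTo x y ↔ TendstoUniformly (fun p n => acMean x p n) (fun _ => y) atTop :=
  Iff.rfl

/-- Comparison of almost-convergent limits. -/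
lemma norm_limit_sub_limit_le {x x' : ℕ → E} {a a' : E} {C : ℝ}
    (hx : AlmostConvergentTo x a) (hx' : AlmostConvergentTo x' a')
    (h : ∀ m, ‖x m - x' m‖ ≤ C) : ‖a - a'‖ ≤ C := by
  have hxu : TendstoUniformly (fun p n => acMean x p n) (fun _ => a) atTop := hx
  have hxu' : TendstoUniformly (fun p n => acMean x' p n) (fun _ => a') atTop := hx'
  have h1 : Tendsto (fun p => acMean x p 0) atTop (𝓝 a) := hxu.tendsto_at 0
  have h2 : Tendsto (fun p => acMean x' p 0) atTop (𝓝 a') := hxu'.tendsto_at 0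
  have h3 : Tendsto (fun p => ‖acMean x p 0 - acMean x' p 0‖) atTop (𝓝 ‖a - a'‖) :=
    ((h1.sub h2).norm)
  refine le_of_tendsto h3 (Eventually.of_forall fun p => ?_)
  exact norm_acMean_sub_acMean_le (fun k _ => h _)

/-- An eventually constant sequence is almost convergent. -/
lemma almostConvergentTo_of_eventually_const {x : ℕ → E} {y : E} {N : ℕ}
    (h : ∀ m, N ≤ m → x m = y) : AlmostConvergentTo x y := by
  set B : ℝ := ∑ m ∈ Finset.range N, ‖x m - y‖ with hB
  have key : ∀ p n : ℕ, ‖acMean x p n - y‖ ≤ ((p : ℝ) + 1)⁻¹ * B := by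
    intro p n
    have hy : y = acMean (fun _ => y) p n := (acMean_const y p n).symm
    have hsum : ∑ k ∈ Finset.range (p + 1), ‖x (n + k) - y‖ ≤ B := by
      have hmap : ∑ k ∈ Finset.range (p + 1), ‖x (n + k) - y‖
          = ∑ m ∈ (Finset.range (p + 1)).image (fun k => n + k), ‖x m - y‖ := by
        rw [Finset.sum_image]
        intro a _ b _ hab
        exact Nat.add_left_cancel hab
      rw [hmap]
      set s := (Finset.range (p + 1)).image (fun k => n + k) with hs
      have h1 : ∑ m ∈ s, ‖x m - y‖ = ∑ m ∈ s ∩ Finset.range N, ‖x m - y‖ := by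
        refine (Finset.sum_subset (Finset.inter_subset_left) ?_).symm
        intro m hm hm'
        have : N ≤ m := by
          by_contra hc
          exact hm' (Finset.mem_inter.mpr ⟨hm, Finset.mem_range.mpr (by omega)⟩)
        simp [h m this]
      rw [h1]
      exact Finset.sum_le_sum_of_subset_of_nonneg Finset.inter_subset_right
        (fun m _ _ => norm_nonneg _)
    have : acMean x p n - y
        = ((p : ℝ) + 1)⁻¹ • ∑ k ∈ Finset.range (p + 1), (x (n + k) - y) := by
      have h2 : ((p : ℝ) + 1)⁻¹ • ∑ k ∈ Finset.range (p + 1), (x (n + k) - y)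
          = acMean x p n - acMean (fun _ => y) p n := by
        simp [acMean, Finset.sum_sub_distrib, smul_sub]
      rw [h2, acMean_const]
    rw [this, norm_smul, Real.norm_eq_abs,
      abs_of_pos (show (0:ℝ) < ((p : ℝ) + 1)⁻¹ by positivity)]
    exact mul_le_mul_of_nonneg_left ((norm_sum_le _ _).trans hsum) (by positivity)
  rw [almostConvergentTo_iff, Metric.tendstoUniformly_iff]
  intro ε hε
  have hlim : Tendsto (fun p : ℕ => ((p : ℝ) + 1)⁻¹ * B) atTop (𝓝 0) := by
    have := tendsto_one_div_add_atTop_nhds_zero_nat (𝕜 := ℝ)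
    simpa [one_div] using this.mul_const B
  have := hlim.eventually (eventually_lt_nhds hε)
  filter_upwards [this] with p hp n
  rw [dist_comm, dist_eq_norm]
  exact lt_of_le_of_lt (key p n) hp

/-- A uniform approximation principle for almost convergence. -/
lemma almostConvergentTo_of_approx {f : ℕ → E} {y : E}
    (h : ∀ ε : ℝ, 0 < ε → ∃ (g : ℕ → E) (z : E), AlmostConvergentTo g z ∧
      (∀ m, ‖f m - g m‖ ≤ ε) ∧ ‖y - z‖ ≤ ε) : AlmostConvergentTo f y := by
  rw [almostConvergentTo_iff, Metric.tendstoUniformly_iff]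
  intro ε hε
  obtain ⟨g, z, hg, hfg, hyz⟩ := h (ε / 4) (by linarith)
  have hg' := (Metric.tendstoUniformly_iff.mp hg) (ε / 4) (by linarith)
  filter_upwards [hg'] with p hp n
  have h1 : ‖acMean f p n - acMean g p n‖ ≤ ε / 4 :=
    norm_acMean_sub_acMean_le (fun k _ => hfg _)
  have h2 : dist z (acMean g p n) < ε / 4 := hp n
  calc dist y (acMean f p n)
      ≤ dist y z + dist z (acMean g p n) + dist (acMean g p n) (acMean f p n) :=
        dist_triangle4 _ _ _ _
    _ ≤ ε / 4 + ε / 4 + ε / 4 := by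
        gcongr
        · rw [dist_eq_norm]; exact hyz
        · rw [dist_eq_norm, ← neg_sub, norm_neg]; exact h1
    _ < ε := by linarith

end Aux

set_option synthInstance.maxHeartbeats 1000000 in
/-- For a real normed space `X`, the set `ac(X)` of almost convergent sequences is a
closed subspace of `ℓ∞(X)` if and only if `X` is complete. -/
theorem stmt15 (X : Type*) [NormedAddCommGroup X] [NormedSpace ℝ X] :
    IsClosed {f : lp (fun _ : ℕ => X) ⊤ | ∃ y : X, AlmostConvergentTo (fun n => f n) y} ↔
      CompleteSpace X := by
  constructor
  · -- closed → complete
    intro hclosed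
    refine Metric.complete_of_cauchySeq_tendsto ?_
    intro u hu
    obtain ⟨R, hR⟩ : ∃ R : ℝ, ∀ n, ‖u n‖ ≤ R := by
      obtain ⟨R, hR⟩ := isBounded_iff_forall_norm_le.mp hu.isBounded_range
      exact ⟨R, fun n => hR _ ⟨n, rfl⟩⟩
    have memf : Memℓp (fun n => u n) (⊤ : ENNReal) :=
      memℓp_infty ⟨R, by rintro r ⟨n, rfl⟩; exact hR n⟩
    set f : lp (fun _ : ℕ => X) ⊤ := ⟨fun n => u n, memf⟩ with hf
    have memg : ∀ j : ℕ, Memℓp (fun n => u (min n j)) (⊤ : ENNReal) := fun j =>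
      memℓp_infty ⟨R, by rintro r ⟨n, rfl⟩; exact hR _⟩
    set g : ℕ → lp (fun _ : ℕ => X) ⊤ := fun j => ⟨fun n => u (min n j), memg j⟩ with hg
    have hgmem : ∀ j, g j ∈
        {f : lp (fun _ : ℕ => X) ⊤ | ∃ y : X, AlmostConvergentTo (fun n => f n) y} := by
      intro j
      refine ⟨u j, almostConvergentTo_of_eventually_const (N := j) ?_⟩
      intro m hm
      show u (min m j) = u j
      rw [min_eq_right hm]
    have htend : Tendsto g atTop (𝓝 f) := by
      rw [Metric.tendsto_atTop]
      intro ε hε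
      obtain ⟨N, hN⟩ := Metric.cauchySeq_iff.mp hu (ε / 2) (by linarith)
      refine ⟨N, fun j hj => ?_⟩
      have hb : ∀ i, ‖(g j - f) i‖ ≤ ε / 2 := by
        intro i
        rw [lp.coeFn_sub]
        show ‖u (min i j) - u i‖ ≤ ε / 2
        rcases le_or_gt i j with h | h
        · simp [min_eq_left h]; linarith
        · rw [min_eq_right h.le, ← dist_eq_norm]
          exact le_of_lt (hN j hj i (le_trans hj h.le))
      have : ‖g j - f‖ ≤ ε / 2 := lp.norm_le_of_forall_le (by linarith) hb
      rw [dist_eq_norm]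
      linarith
    obtain ⟨y, hy⟩ := hclosed.mem_of_tendsto htend (Eventually.of_forall hgmem)
    refine ⟨y, Metric.tendsto_atTop.mpr ?_⟩
    intro ε hε
    have hyu : TendstoUniformly (fun p n => acMean (fun n => f n) p n)
        (fun _ => y) atTop := hy
    obtain ⟨p, hp⟩ := (Metric.tendstoUniformly_iff.mp hyu (ε / 2) (by linarith)).exists
    obtain ⟨N, hN⟩ := Metric.cauchySeq_iff.mp hu (ε / 2) (by linarith)
    refine ⟨N, fun n hn => ?_⟩
    have h1 : ‖u n - acMean (fun n => f n) p n‖ ≤ ε / 2 := by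
      have hc : u n = acMean (fun _ => u n) p n := (acMean_const (u n) p n).symm
      rw [hc]
      refine norm_acMean_sub_acMean_le (fun k hk => ?_)
      show ‖u n - u (n + k)‖ ≤ ε / 2
      rw [← dist_eq_norm]
      exact le_of_lt (hN n hn (n + k) (le_trans hn (Nat.le_add_right n k)))
    calc dist (u n) y ≤ dist (u n) (acMean (fun n => f n) p n)
          + dist (acMean (fun n => f n) p n) y := dist_triangle _ _ _
      _ < ε / 2 + ε / 2 := by
          apply add_lt_add_of_le_of_lt
          · rw [dist_eq_norm]; exact h1
          · rw [dist_comm]; exact hp n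
      _ = ε := by ring
  · -- complete → closed
    intro hX
    have : SequentialSpace ↥(lp (fun _ : ℕ => X) ⊤) := inferInstance
    rw [← isSeqClosed_iff_isClosed]
    intro g f hmem htend
    choose y hy using hmem
    have hcau : CauchySeq y := by
      rw [Metric.cauchySeq_iff]
      intro ε hε
      obtain ⟨N, hN⟩ := Metric.cauchySeq_iff.mp htend.cauchySeq ε hε
      refine ⟨N, fun m hm n hn => ?_⟩
      have hle : ‖y m - y n‖ ≤ ‖g m - g n‖ := by
        refine norm_limit_sub_limit_le (hy m) (hy n) (fun i => ?_)
        have := lp.norm_apply_le_norm ENNReal.top_ne_zero (g m - g n) i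
        simpa [lp.coeFn_sub] using this
      calc dist (y m) (y n) = ‖y m - y n‖ := dist_eq_norm _ _
        _ ≤ ‖g m - g n‖ := hle
        _ = dist (g m) (g n) := (dist_eq_norm _ _).symm
        _ < ε := hN m hm n hn
    obtain ⟨z, hz⟩ := cauchySeq_tendsto_of_complete hcau
    refine ⟨z, almostConvergentTo_of_approx ?_⟩
    intro ε hε
    obtain ⟨N1, hN1⟩ := Metric.tendsto_atTop.mp htend ε hε
    obtain ⟨N2, hN2⟩ := Metric.tendsto_atTop.mp hz ε hε
    set j := max N1 N2 with hj
    refine ⟨fun n => g j n, y j, hy j, fun m => ?_, ?_⟩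
    · have happ := lp.norm_apply_le_norm ENNReal.top_ne_zero (f - g j) m
      have hd := hN1 j (le_max_left _ _)
      calc ‖f m - g j m‖ ≤ ‖f - g j‖ := by simpa [lp.coeFn_sub] using happ
        _ = dist (g j) f := by rw [dist_comm, dist_eq_norm]
        _ ≤ ε := le_of_lt hd
    · have hd := hN2 j (le_max_right _ _)
      calc ‖z - y j‖ = dist (y j) z := by rw [dist_comm, dist_eq_norm]
        _ ≤ ε := le_of_lt hd
end

section
/- Let X be a real normed space and let (x_n)_{n∈ℕ} be a bounded sequence in X. Then (x_n) is almost convergent to 0 if and only if T((x_n)) = 0 for every shift-invariant continuous linear operator T : ℓ∞(X) → X. -/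
open Filter Topology

namespace AC18

variable {X : Type*} [NormedAddCommGroup X] [NormedSpace ℝ X]

/-- Shift of an element of `ℓ∞(X)` by `k`. -/
noncomputable def shift (f : lp (fun _ : ℕ => X) ⊤) (k : ℕ) : lp (fun _ : ℕ => X) ⊤ :=
  ⟨fun n => f (n + k), memℓp_infty ⟨‖f‖, by
    rintro r ⟨n, rfl⟩
    exact lp.norm_apply_le_norm ENNReal.top_ne_zero f (n + k)⟩⟩

@[simp] lemma shift_apply (f : lp (fun _ : ℕ => X) ⊤) (k n : ℕ) :
    shift f k n = f (n + k) := rfl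

lemma shift_zero (f : lp (fun _ : ℕ => X) ⊤) : shift f 0 = f :=
  lp.ext (funext fun n => by simp)

lemma shift_neg (f : lp (fun _ : ℕ => X) ⊤) (k : ℕ) : shift (-f) k = -(shift f k) :=
  lp.ext (funext fun n => by simp [lp.coeFn_neg, shift_apply])

/-- The Cesàro mean of the shifts. -/
noncomputable def mean (p : ℕ) (f : lp (fun _ : ℕ => X) ⊤) : lp (fun _ : ℕ => X) ⊤ :=
  ((p : ℝ) + 1)⁻¹ • ∑ k ∈ Finset.range (p + 1), shift f k

lemma mean_apply (p : ℕ) (f : lp (fun _ : ℕ => X) ⊤) (n : ℕ) :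
    mean p f n = ((p : ℝ) + 1)⁻¹ • ∑ k ∈ Finset.range (p + 1), f (n + k) := by
  have h1 : (mean p f : ∀ _ : ℕ, X) n
      = ((p : ℝ) + 1)⁻¹ • ((∑ k ∈ Finset.range (p + 1), shift f k : lp (fun _ : ℕ => X) ⊤)
          : ∀ _ : ℕ, X) n := by
    rw [mean, lp.coeFn_smul]; rfl
  rw [h1, lp.coeFn_sum]
  simp [shift_apply]

lemma mean_add (p : ℕ) (f g : lp (fun _ : ℕ => X) ⊤) :
    mean p (f + g) = mean p f + mean p g := by
  refine lp.ext (funext fun n => ?_)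
  have := lp.coeFn_add (mean p f) (mean p g)
  calc (mean p (f + g) : ∀ _ : ℕ, X) n
      = ((p : ℝ) + 1)⁻¹ • ∑ k ∈ Finset.range (p + 1), (f + g) (n + k) := mean_apply ..
    _ = (mean p f : ∀ _ : ℕ, X) n + (mean p g : ∀ _ : ℕ, X) n := by
        simp only [lp.coeFn_add, Pi.add_apply, mean_apply, Finset.sum_add_distrib, smul_add]
    _ = ((mean p f + mean p g : lp (fun _ : ℕ => X) ⊤) : ∀ _ : ℕ, X) n := by
        rw [lp.coeFn_add]; rfl

lemma mean_smul (p : ℕ) (c : ℝ) (f : lp (fun _ : ℕ => X) ⊤) :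
    mean p (c • f) = c • mean p f := by
  refine lp.ext (funext fun n => ?_)
  calc (mean p (c • f) : ∀ _ : ℕ, X) n
      = ((p : ℝ) + 1)⁻¹ • ∑ k ∈ Finset.range (p + 1), (c • f) (n + k) := mean_apply ..
    _ = c • ((mean p f : ∀ _ : ℕ, X) n) := by
        simp only [lp.coeFn_smul, Pi.smul_apply, mean_apply, Finset.smul_sum, smul_comm c]
    _ = ((c • mean p f : lp (fun _ : ℕ => X) ⊤) : ∀ _ : ℕ, X) n := by
        rw [lp.coeFn_smul]; rfl

lemma mean_zero (p : ℕ) : mean p (0 : lp (fun _ : ℕ => X) ⊤) = 0 := by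
  refine lp.ext (funext fun n => ?_)
  rw [mean_apply]
  simp [lp.coeFn_zero]

/-- `a p f` is the sup norm of the `p`-th mean. -/
noncomputable def a (p : ℕ) (f : lp (fun _ : ℕ => X) ⊤) : ℝ := ‖mean p f‖

lemma a_nonneg (p : ℕ) (f : lp (fun _ : ℕ => X) ⊤) : 0 ≤ a p f := norm_nonneg _

lemma a_zero (f : lp (fun _ : ℕ => X) ⊤) : a 0 f = ‖f‖ := by
  have : mean 0 f = f := by
    refine lp.ext (funext fun n => ?_)
    rw [mean_apply]
    simp
  rw [a, this]

lemma norm_mean_apply_le (p : ℕ) (f : lp (fun _ : ℕ => X) ⊤) (n : ℕ) :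
    ‖mean p f n‖ ≤ a p f :=
  lp.norm_apply_le_norm ENNReal.top_ne_zero (mean p f) n

lemma block_norm_eq (p : ℕ) (f : lp (fun _ : ℕ => X) ⊤) (n : ℕ) :
    ‖∑ k ∈ Finset.range (p + 1), f (n + k)‖ = ((p : ℝ) + 1) * ‖mean p f n‖ := by
  have hp : (0 : ℝ) < (p : ℝ) + 1 := by positivity
  rw [mean_apply, norm_smul, norm_inv, Real.norm_eq_abs, abs_of_pos hp]
  field_simp

lemma block_sum_le (p m : ℕ) (f : lp (fun _ : ℕ => X) ⊤) (n : ℕ) :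
    ‖∑ k ∈ Finset.range (m * (p + 1)), f (n + k)‖ ≤ (m : ℝ) * (((p : ℝ) + 1) * a p f) := by
  induction m with
  | zero => simp
  | succ m ih =>
      have hsplit : ∑ k ∈ Finset.range (m * (p + 1) + (p + 1)), f (n + k)
          = ∑ k ∈ Finset.range (m * (p + 1)), f (n + k)
            + ∑ i ∈ Finset.range (p + 1), f (n + (m * (p + 1) + i)) :=
        Finset.sum_range_add (fun k => f (n + k)) (m * (p + 1)) (p + 1)
      have hm : (m + 1) * (p + 1) = m * (p + 1) + (p + 1) := by ring
      rw [hm, hsplit]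
      have h2 : ‖∑ i ∈ Finset.range (p + 1), f (n + (m * (p + 1) + i))‖
          ≤ ((p : ℝ) + 1) * a p f := by
        have : ∀ i, n + (m * (p + 1) + i) = (n + m * (p + 1)) + i := fun i => by ring
        simp only [this]
        rw [block_norm_eq p f (n + m * (p + 1))]
        have := norm_mean_apply_le p f (n + m * (p + 1))
        nlinarith [a_nonneg p f]
      calc ‖_ + _‖ ≤ ‖∑ k ∈ Finset.range (m * (p + 1)), f (n + k)‖
            + ‖∑ i ∈ Finset.range (p + 1), f (n + (m * (p + 1) + i))‖ := norm_add_le _ _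
        _ ≤ (m : ℝ) * (((p : ℝ) + 1) * a p f) + ((p : ℝ) + 1) * a p f := add_le_add ih h2
        _ = ((m : ℝ) + 1) * (((p : ℝ) + 1) * a p f) := by ring
        _ = (((m : ℕ) + 1 : ℕ) : ℝ) * (((p : ℝ) + 1) * a p f) := by push_cast; ring

/-- The key inequality: long means are almost dominated by short means. -/
lemma a_le (p q : ℕ) (f : lp (fun _ : ℕ => X) ⊤) :
    a q f ≤ a p f + ((p : ℝ) + 1) * ‖f‖ / ((q : ℝ) + 1) := by
  have hQ : (0 : ℝ) < (q : ℝ) + 1 := by positivity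
  have hC : 0 ≤ a p f + ((p : ℝ) + 1) * ‖f‖ / ((q : ℝ) + 1) := by
    have := a_nonneg p f
    positivity
  refine lp.norm_le_of_forall_le hC fun n => ?_
  set m := (q + 1) / (p + 1) with hm
  set r := (q + 1) % (p + 1) with hr
  have hqd : q + 1 = m * (p + 1) + r := by
    rw [hm, hr, Nat.mul_comm]
    exact (Nat.div_add_mod (q + 1) (p + 1)).symm
  have hrle : r ≤ p := by
    have := Nat.mod_lt (q + 1) (y := p + 1) (by omega)
    omega
  have hmle : m * (p + 1) ≤ q + 1 := by omega
  have hsplit : ∑ k ∈ Finset.range (q + 1), f (n + k)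
      = ∑ k ∈ Finset.range (m * (p + 1)), f (n + k)
        + ∑ i ∈ Finset.range r, f (n + (m * (p + 1) + i)) := by
    rw [hqd]
    exact Finset.sum_range_add (fun k => f (n + k)) (m * (p + 1)) r
  have hnorm : ‖∑ k ∈ Finset.range (q + 1), f (n + k)‖
      ≤ (m : ℝ) * (((p : ℝ) + 1) * a p f) + (r : ℝ) * ‖f‖ := by
    rw [hsplit]
    refine (norm_add_le _ _).trans (add_le_add (block_sum_le p m f n) ?_)
    calc ‖∑ i ∈ Finset.range r, f (n + (m * (p + 1) + i))‖
        ≤ ∑ i ∈ Finset.range r, ‖f (n + (m * (p + 1) + i))‖ := norm_sum_le _ _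
      _ ≤ ∑ _i ∈ Finset.range r, ‖f‖ := Finset.sum_le_sum fun i _ =>
          lp.norm_apply_le_norm ENNReal.top_ne_zero f _
      _ = (r : ℝ) * ‖f‖ := by simp [mul_comm]
  have hmean : ‖mean q f n‖ = ((q : ℝ) + 1)⁻¹ * ‖∑ k ∈ Finset.range (q + 1), f (n + k)‖ := by
    rw [mean_apply, norm_smul, norm_inv, Real.norm_eq_abs, abs_of_pos hQ]
  rw [hmean]
  have hmR : ((m : ℝ)) * ((p : ℝ) + 1) ≤ (q : ℝ) + 1 := by
    have : ((m * (p + 1) : ℕ) : ℝ) ≤ ((q + 1 : ℕ) : ℝ) := Nat.cast_le.mpr hmle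
    push_cast at this; linarith
  have hrR : ((r : ℝ)) ≤ (p : ℝ) + 1 := by
    have : ((r : ℕ) : ℝ) ≤ ((p : ℕ) : ℝ) := Nat.cast_le.mpr hrle
    linarith
  have hap := a_nonneg p f
  have hfn : (0 : ℝ) ≤ ‖f‖ := norm_nonneg f
  calc ((q : ℝ) + 1)⁻¹ * ‖∑ k ∈ Finset.range (q + 1), f (n + k)‖
      ≤ ((q : ℝ) + 1)⁻¹ * ((m : ℝ) * (((p : ℝ) + 1) * a p f) + (r : ℝ) * ‖f‖) := by
        gcongr
    _ ≤ ((q : ℝ) + 1)⁻¹ * (((q : ℝ) + 1) * a p f + ((p : ℝ) + 1) * ‖f‖) := by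
        refine mul_le_mul_of_nonneg_left ?_ (by positivity)
        nlinarith [mul_le_mul_of_nonneg_right hmR hap, mul_le_mul_of_nonneg_right hrR hfn]
    _ = a p f + ((p : ℝ) + 1) * ‖f‖ / ((q : ℝ) + 1) := by
        field_simp

/-- The sublinear functional. -/
noncomputable def L (f : lp (fun _ : ℕ => X) ⊤) : ℝ := ⨅ p, a p f

lemma bdd (f : lp (fun _ : ℕ => X) ⊤) : BddBelow (Set.range fun p => a p f) :=
  ⟨0, by rintro x ⟨p, rfl⟩; exact a_nonneg p f⟩

lemma L_le_a (p : ℕ) (f : lp (fun _ : ℕ => X) ⊤) : L f ≤ a p f :=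
  ciInf_le (bdd f) p

lemma L_nonneg (f : lp (fun _ : ℕ => X) ⊤) : 0 ≤ L f :=
  le_ciInf fun p => a_nonneg p f

lemma L_le_norm (f : lp (fun _ : ℕ => X) ⊤) : L f ≤ ‖f‖ :=
  (L_le_a 0 f).trans_eq (a_zero f)

lemma tendsto_aux (c : ℝ) : Tendsto (fun q : ℕ => c / ((q : ℝ) + 1)) atTop (𝓝 0) := by
  have h := tendsto_one_div_add_atTop_nhds_zero_nat (𝕜 := ℝ)
  have := h.const_mul c
  simpa [div_eq_mul_inv, mul_comm, mul_assoc, one_div] using this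

lemma L_add (f g : lp (fun _ : ℕ => X) ⊤) : L (f + g) ≤ L f + L g := by
  have key : ∀ p q : ℕ, L (f + g) ≤ a p f + a q g := by
    intro p q
    have h1 : ∀ Q : ℕ, L (f + g)
        ≤ a p f + a q g + (((p : ℝ) + 1) * ‖f‖ + ((q : ℝ) + 1) * ‖g‖) / ((Q : ℝ) + 1) := by
      intro Q
      have hQ : (0 : ℝ) < (Q : ℝ) + 1 := by positivity
      have h2 : a Q (f + g) ≤ a Q f + a Q g := by
        rw [a, a, a, mean_add]; exact norm_add_le _ _
      have h3 := a_le p Q f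
      have h4 := a_le q Q g
      have := (L_le_a Q (f + g)).trans h2
      rw [add_div]
      linarith
    have := ge_of_tendsto' (((tendsto_aux (((p : ℝ) + 1) * ‖f‖ + ((q : ℝ) + 1) * ‖g‖)).const_add
      (a p f + a q g))) h1
    simpa using this
  have step1 : ∀ p : ℕ, L (f + g) - a p f ≤ L g := fun p =>
    le_ciInf fun q => by linarith [key p q]
  have step2 : L (f + g) - L g ≤ L f :=
    le_ciInf fun p => by linarith [step1 p]
  linarith

lemma L_smul (c : ℝ) (hc : 0 ≤ c) (f : lp (fun _ : ℕ => X) ⊤) : L (c • f) = c * L f := by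
  have h : ∀ p, a p (c • f) = c * a p f := fun p => by
    rw [a, mean_smul, norm_smul, Real.norm_eq_abs, abs_of_nonneg hc, a]
  simp only [L, h]
  exact (Real.mul_iInf_of_nonneg hc _).symm

lemma L_zero : L (0 : lp (fun _ : ℕ => X) ⊤) = 0 := by
  have h : ∀ p, a p (0 : lp (fun _ : ℕ => X) ⊤) = 0 := fun p => by
    rw [a, mean_zero]; simp
  simp [L, h]

lemma L_shift_sub (u : lp (fun _ : ℕ => X) ⊤) : L (shift u 1 - u) = 0 := by
  refine le_antisymm ?_ (L_nonneg _)
  have hbound : ∀ p : ℕ, a p (shift u 1 - u) ≤ 2 * ‖u‖ / ((p : ℝ) + 1) := by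
    intro p
    have hp : (0 : ℝ) < (p : ℝ) + 1 := by positivity
    refine lp.norm_le_of_forall_le (by positivity) fun n => ?_
    have happ : (shift u 1 - u : lp (fun _ : ℕ => X) ⊤) = shift u 1 - u := rfl
    have hcoord : ∀ k, (shift u 1 - u : lp (fun _ : ℕ => X) ⊤) (n + k)
        = u (n + (k + 1)) - u (n + k) := by
      intro k
      have := lp.coeFn_sub (shift u 1) u
      rw [happ]
      calc (shift u 1 - u : lp (fun _ : ℕ => X) ⊤) (n + k)
          = shift u 1 (n + k) - u (n + k) := by rw [this]; rfl
        _ = u (n + (k + 1)) - u (n + k) := by rw [shift_apply, Nat.add_assoc]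
    have htel : ∑ k ∈ Finset.range (p + 1),
        (shift u 1 - u : lp (fun _ : ℕ => X) ⊤) (n + k)
        = u (n + (p + 1)) - u (n + 0) := by
      simp only [hcoord]
      exact Finset.sum_range_sub (fun k => u (n + k)) (p + 1)
    rw [mean_apply, htel, norm_smul, norm_inv, Real.norm_eq_abs, abs_of_pos hp]
    have h1 : ‖u (n + (p + 1)) - u (n + 0)‖ ≤ 2 * ‖u‖ := by
      calc ‖u (n + (p + 1)) - u (n + 0)‖ ≤ ‖u (n + (p + 1))‖ + ‖u (n + 0)‖ := norm_sub_le _ _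
        _ ≤ ‖u‖ + ‖u‖ := add_le_add (lp.norm_apply_le_norm ENNReal.top_ne_zero u _)
            (lp.norm_apply_le_norm ENNReal.top_ne_zero u _)
        _ = 2 * ‖u‖ := by ring
    rw [div_eq_inv_mul]
    gcongr
  have h2 : ∀ p : ℕ, L (shift u 1 - u) ≤ 2 * ‖u‖ / ((p : ℝ) + 1) := fun p =>
    (L_le_a p _).trans (hbound p)
  have := ge_of_tendsto' (tendsto_aux (2 * ‖u‖)) h2
  simpa using this

lemma L_neg_le (f : lp (fun _ : ℕ => X) ⊤) : -L f ≤ L (-f) := by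
  have := L_add f (-f)
  rw [add_neg_cancel, L_zero] at this
  linarith

/-- almost convergence to 0 is equivalent to `a p f → 0`. -/
lemma almostConvergent_iff (f : lp (fun _ : ℕ => X) ⊤) :
    AlmostConvergentTo (fun n => f n) 0 ↔ Tendsto (fun p => a p f) atTop (𝓝 0) := by
  rw [AlmostConvergentTo, Metric.tendstoUniformly_iff]
  constructor
  · intro h
    rw [Metric.tendsto_atTop]
    intro ε hε
    obtain ⟨P, hP⟩ := eventually_atTop.mp (h (ε / 2) (by linarith))
    refine ⟨P, fun p hp => ?_⟩
    have hle : a p f ≤ ε / 2 := by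
      refine lp.norm_le_of_forall_le (by linarith) fun n => ?_
      have := hP p hp n
      rw [dist_eq_norm, zero_sub, norm_neg] at this
      rw [mean_apply]
      exact this.le
    rw [Real.dist_eq, sub_zero, abs_of_nonneg (a_nonneg p f)]
    linarith
  · intro h ε hε
    rw [Metric.tendsto_atTop] at h
    obtain ⟨P, hP⟩ := h ε hε
    filter_upwards [eventually_ge_atTop P] with p hp n
    have h1 := hP p hp
    rw [Real.dist_eq, sub_zero, abs_of_nonneg (a_nonneg p f)] at h1
    have h2 : ‖mean p f n‖ ≤ a p f := norm_mean_apply_le p f n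
    rw [dist_eq_norm, zero_sub, norm_neg, ← mean_apply]
    linarith

lemma tendsto_a_of_L_eq_zero (f : lp (fun _ : ℕ => X) ⊤) (hL : L f = 0) :
    Tendsto (fun p => a p f) atTop (𝓝 0) := by
  rw [Metric.tendsto_atTop]
  intro ε hε
  have hinf : ⨅ p, a p f < ε / 2 := by rw [← L]; linarith
  obtain ⟨p, hp⟩ := exists_lt_of_ciInf_lt hinf
  have hlim := tendsto_aux (((p : ℝ) + 1) * ‖f‖)
  rw [Metric.tendsto_atTop] at hlim
  obtain ⟨P, hP⟩ := hlim (ε / 2) (by linarith)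
  refine ⟨P, fun q hq => ?_⟩
  have h1 := hP q hq
  rw [Real.dist_eq, sub_zero, abs_of_nonneg (by positivity)] at h1
  have h2 := a_le p q f
  rw [Real.dist_eq, sub_zero, abs_of_nonneg (a_nonneg q f)]
  linarith

end AC18

open AC18 in
/-- A bounded sequence in a real normed space `X` is almost convergent to `0` if and only
if it is annihilated by every shift-invariant continuous linear operator `ℓ∞(X) → X`. -/
theorem stmt18 (X : Type*) [NormedAddCommGroup X] [NormedSpace ℝ X]
    (f : lp (fun _ : ℕ => X) ⊤) :
    AlmostConvergentTo (fun n => f n) 0 ↔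
      ∀ T : lp (fun _ : ℕ => X) ⊤ →L[ℝ] X,
        (∀ u v : lp (fun _ : ℕ => X) ⊤, (∀ n, v n = u (n + 1)) → T v = T u) →
        T f = 0 := by
  constructor
  · -- forward direction
    intro hac T hT
    have ha := (almostConvergent_iff f).mp hac
    -- T (shift f k) = T f
    have hshift : ∀ k, T (shift f k) = T f := by
      intro k
      induction k with
      | zero => rw [shift_zero]
      | succ k ih =>
          rw [← ih]
          exact hT (shift f k) (shift f (k + 1)) fun n => by
            have h : n + (k + 1) = (n + 1) + k := by omega
            simp [shift_apply, h]
    have hmean : ∀ p, T (mean p f) = T f := by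
      intro p
      rw [mean, map_smul, map_sum]
      simp only [hshift]
      rw [Finset.sum_const, Finset.card_range]
      have hp : ((p : ℝ) + 1) ≠ 0 := by positivity
      have : ((p : ℝ) + 1)⁻¹ * ((p + 1 : ℕ) : ℝ) = 1 := by
        push_cast; field_simp
      rw [← Nat.cast_smul_eq_nsmul ℝ, smul_smul, this, one_smul]
    have hbound : ∀ p, ‖T f‖ ≤ ‖T‖ * a p f := by
      intro p
      rw [← hmean p]
      exact T.le_opNorm (mean p f)
    have hlim : Tendsto (fun p => ‖T‖ * a p f) atTop (𝓝 0) := by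
      simpa using ha.const_mul ‖T‖
    have := ge_of_tendsto' hlim hbound
    exact norm_le_zero_iff.mp this
  · -- backward direction
    intro hT
    rw [almostConvergent_iff]
    refine tendsto_a_of_L_eq_zero f ?_
    by_contra hL
    have hε : 0 < L f := lt_of_le_of_ne (L_nonneg f) (Ne.symm hL)
    set ε := L f with hεdef
    have hf0 : f ≠ 0 := by
      intro h
      have hz : L f = 0 := by rw [h]; exact L_zero
      exact hL (hεdef.trans hz)
    -- pick a nonzero coordinate
    have hn0 : ∃ n0, f n0 ≠ 0 := by
      by_contra h
      push_neg at h
      exact hf0 (lp.ext (funext fun n => by simpa using h n))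
    obtain ⟨n0, hn0⟩ := hn0
    -- Hahn-Banach extension
    have Hsc : ∀ c : ℝ, c • f = 0 → c • ε = 0 := by
      intro c hc
      rcases smul_eq_zero.mp hc with h | h
      · simp [h]
      · exact absurd h hf0
    set g : (lp (fun _ : ℕ => X) ⊤) →ₗ.[ℝ] ℝ := LinearPMap.mkSpanSingleton' f ε Hsc with hg
    have hdom : g.domain = ℝ ∙ f := rfl
    have hgle : ∀ x : g.domain, g x ≤ L (x : lp (fun _ : ℕ => X) ⊤) := by
      rintro ⟨x, hx⟩
      rw [hdom] at hx
      obtain ⟨c, hc⟩ := Submodule.mem_span_singleton.mp hx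
      have hxeq : (⟨x, hx⟩ : g.domain) = ⟨c • f, hc ▸ hx⟩ := by
        apply Subtype.ext; exact hc.symm
      rw [hxeq]
      have happly : g ⟨c • f, hc ▸ hx⟩ = c • ε :=
        LinearPMap.mkSpanSingleton'_apply f ε Hsc c _
      rw [happly]
      simp only [smul_eq_mul]
      show c * ε ≤ L (c • f)
      rcases le_or_gt 0 c with h | h
      · rw [L_smul c h f]
      · have hc1 : c • f = (-c) • (-f) := by rw [smul_neg, neg_smul, neg_neg]
        rw [hc1, L_smul (-c) (by linarith) (-f)]
        have := L_neg_le f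
        nlinarith
    obtain ⟨Λ, hΛeq, hΛle⟩ := exists_extension_of_le_sublinear g L
      (fun c hc x => L_smul c hc.le x) L_add hgle
    have hΛf : Λ f = ε := by
      have hmem : f ∈ g.domain := by
        rw [hdom]; exact Submodule.mem_span_singleton_self f
      have := hΛeq ⟨f, hmem⟩
      rw [this]
      exact LinearPMap.mkSpanSingleton'_apply_self f ε Hsc hmem
    -- continuity
    have hΛbound : ∀ x, ‖Λ x‖ ≤ 1 * ‖x‖ := by
      intro x
      rw [one_mul, Real.norm_eq_abs, abs_le]
      constructor
      · have h1 : Λ (-x) ≤ L (-x) := hΛle (-x)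
        have h2 : L (-x) ≤ ‖-x‖ := L_le_norm (-x)
        rw [map_neg, norm_neg] at *
        linarith [map_neg Λ x ▸ h1, (norm_neg x ▸ h2 : L (-x) ≤ ‖x‖)]
      · exact (hΛle x).trans (L_le_norm x)
    set Λc : lp (fun _ : ℕ => X) ⊤ →L[ℝ] ℝ := Λ.mkContinuous 1 hΛbound with hΛc
    have hΛcapp : ∀ x, Λc x = Λ x := fun x => rfl
    -- shift invariance of Λ
    have hΛshift : ∀ u v : lp (fun _ : ℕ => X) ⊤, (∀ n, v n = u (n + 1)) → Λ v = Λ u := by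
      intro u v huv
      have hveq : v = shift u 1 := lp.ext (funext fun n => by rw [huv n]; rfl)
      have h1 : Λ v - Λ u ≤ 0 := by
        have h0 : L (v - u) = 0 := by rw [hveq]; exact L_shift_sub u
        have := hΛle (v - u)
        rw [map_sub, h0] at this
        exact this
      have h2 : Λ u - Λ v ≤ 0 := by
        have hneg : u - v = shift (-u) 1 - (-u) := by
          rw [shift_neg, hveq]
          abel
        have h0 : L (u - v) = 0 := by rw [hneg]; exact L_shift_sub (-u)
        have := hΛle (u - v)
        rw [map_sub, h0] at this
        exact this
      linarith
    -- the operator T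
    set T : lp (fun _ : ℕ => X) ⊤ →L[ℝ] X := Λc.smulRight (f n0) with hTdef
    have hTinv : ∀ u v : lp (fun _ : ℕ => X) ⊤, (∀ n, v n = u (n + 1)) → T v = T u := by
      intro u v huv
      show Λc v • f n0 = Λc u • f n0
      rw [hΛcapp, hΛcapp, hΛshift u v huv]
    have hTf := hT T hTinv
    have : T f = ε • f n0 := by
      show Λc f • f n0 = ε • f n0
      rw [hΛcapp, hΛf]
    rw [this] at hTf
    exact (smul_ne_zero (ne_of_gt hε) hn0) hTf
end

section
/- Let X be a real Banach space and (x_i)_{i∈ℕ} a sequence in X such that for every subset M ⊆ ℕ the series ∑_{i∈M} x_i is weakly almost summable, i.e., there exists y_M ∈ X such that for every continuous linear functional f on X the sequence of partial sums (∑_{i∈M, i≤n} f(x_i))_{n∈ℕ} is almost convergent to f(y_M). Then ∑ x_i is unconditionally convergent, i.e., the family (x_i)_{i∈ℕ} is summable (the net of finite partial sums ∑_{i∈F} x_i over finite F ⊆ ℕ converges in X). -/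
set_option maxHeartbeats 1000000

open Filter Topology

namespace OPaux

lemma ac_unique {a : ℕ → ℝ} {r r' : ℝ} (h : AlmostConvergentTo a r)
    (h' : AlmostConvergentTo a r') : r = r' :=
  tendsto_nhds_unique (h.tendsto_at 0) (h'.tendsto_at 0)

lemma mean_abs_le {a : ℕ → ℝ} {C : ℝ} (hb : ∀ n, |a n| ≤ C) (p n : ℕ) :
    |((p : ℝ) + 1)⁻¹ • ∑ k ∈ Finset.range (p + 1), a (n + k)| ≤ C := by
  have hp : (0:ℝ) < (p:ℝ) + 1 := by positivity
  rw [smul_eq_mul, abs_mul, abs_inv, abs_of_pos hp]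
  have h1 : |∑ k ∈ Finset.range (p + 1), a (n + k)| ≤ ∑ k ∈ Finset.range (p + 1), |a (n + k)| :=
    Finset.abs_sum_le_sum_abs _ _
  have h2 : ∑ k ∈ Finset.range (p + 1), |a (n + k)| ≤ ((p:ℝ) + 1) * C := by
    calc ∑ k ∈ Finset.range (p + 1), |a (n + k)| ≤ ∑ _k ∈ Finset.range (p + 1), C :=
          Finset.sum_le_sum fun k _ => hb _
      _ = ((p:ℝ) + 1) * C := by
          rw [Finset.sum_const, Finset.card_range]; push_cast; ring
  calc ((p:ℝ)+1)⁻¹ * |∑ k ∈ Finset.range (p + 1), a (n + k)|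
      ≤ ((p:ℝ)+1)⁻¹ * (((p:ℝ) + 1) * C) := by
        apply mul_le_mul_of_nonneg_left (le_trans h1 h2) (by positivity)
    _ = C := by field_simp

lemma ac_abs_le {a : ℕ → ℝ} {r C : ℝ} (h : AlmostConvergentTo a r)
    (hb : ∀ n, |a n| ≤ C) : |r| ≤ C := by
  have ht := (h.tendsto_at 0).abs
  exact le_of_tendsto ht (Filter.Eventually.of_forall fun p => mean_abs_le hb p 0)

lemma ac_mono_bound {a : ℕ → ℝ} {r : ℝ} (h : AlmostConvergentTo a r)
    (mono : Monotone a) : ∀ n, a n ≤ r + 1 := by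
  have h1 := (Metric.tendstoUniformly_iff.1 h) 1 one_pos
  obtain ⟨p, hp⟩ := h1.exists
  intro n
  have hmean : a n ≤ ((p : ℝ) + 1)⁻¹ • ∑ k ∈ Finset.range (p + 1), a (n + k) := by
    have hpos : (0:ℝ) < (p:ℝ) + 1 := by positivity
    rw [smul_eq_mul]
    have h2 : ((p:ℝ)+1) * a n ≤ ∑ k ∈ Finset.range (p + 1), a (n + k) := by
      calc ((p:ℝ)+1) * a n = ∑ _k ∈ Finset.range (p+1), a n := by
            rw [Finset.sum_const, Finset.card_range]; push_cast; ring
        _ ≤ _ := Finset.sum_le_sum fun k _ => mono (Nat.le_add_right n k)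
    rw [le_inv_mul_iff₀ hpos]
    linarith [h2]
  have := hp n
  rw [Real.dist_eq] at this
  have := abs_lt.1 this
  linarith [hmean, this.2]

lemma ac_eventually_const {a : ℕ → ℝ} {c : ℝ} {N : ℕ}
    (h : ∀ m, N ≤ m → a m = c) : AlmostConvergentTo a c := by
  classical
  set B : ℝ := ∑ m ∈ Finset.range N, |c - a m| with hB
  have hB0 : 0 ≤ B := Finset.sum_nonneg fun _ _ => abs_nonneg _
  rw [AlmostConvergentTo, Metric.tendstoUniformly_iff]
  intro ε hε
  have hT : Tendsto (fun p : ℕ => ((p:ℝ) + 1)⁻¹ * B) atTop (𝓝 0) := by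
    have := tendsto_one_div_add_atTop_nhds_zero_nat.mul_const B
    simpa [one_div] using this
  have hev : ∀ᶠ p : ℕ in atTop, ((p:ℝ) + 1)⁻¹ * B < ε :=
    (hT.eventually (eventually_lt_nhds hε)).mono (fun p hp => by simpa using hp)
  filter_upwards [hev] with p hp n
  rw [Real.dist_eq]
  have hpos : (0:ℝ) < (p:ℝ) + 1 := by positivity
  have key : |c - ((p : ℝ) + 1)⁻¹ • ∑ k ∈ Finset.range (p + 1), a (n + k)|
      ≤ ((p:ℝ) + 1)⁻¹ * B := by
    have hrw : c - ((p : ℝ) + 1)⁻¹ • ∑ k ∈ Finset.range (p + 1), a (n + k)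
        = ((p:ℝ)+1)⁻¹ * ∑ k ∈ Finset.range (p + 1), (c - a (n + k)) := by
      rw [smul_eq_mul, Finset.sum_sub_distrib]
      rw [Finset.sum_const, Finset.card_range, mul_sub, nsmul_eq_mul]
      push_cast
      field_simp
    rw [hrw, abs_mul, abs_inv, abs_of_pos hpos]
    apply mul_le_mul_of_nonneg_left _ (by positivity)
    calc |∑ k ∈ Finset.range (p + 1), (c - a (n + k))|
        ≤ ∑ k ∈ Finset.range (p + 1), |c - a (n + k)| := Finset.abs_sum_le_sum_abs _ _
      _ = ∑ k ∈ (Finset.range (p + 1)).filter (fun k => n + k < N), |c - a (n + k)| := by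
          symm
          apply Finset.sum_filter_of_ne
          intro k _ hk
          by_contra hkN
          push_neg at hkN
          rw [h _ hkN] at hk
          simp at hk
      _ = ∑ m ∈ ((Finset.range (p + 1)).filter (fun k => n + k < N)).image (n + ·), |c - a m| := by
          rw [Finset.sum_image]
          intro u _ v _ huv
          exact Nat.add_left_cancel huv
      _ ≤ B := by
          apply Finset.sum_le_sum_of_subset_of_nonneg
          · intro m hm
            simp only [Finset.mem_image, Finset.mem_filter, Finset.mem_range] at hm
            obtain ⟨k, ⟨_, hkN⟩, rfl⟩ := hm
            exact Finset.mem_range.2 hkN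
          · intro m _ _; exact abs_nonneg _
  exact lt_of_le_of_lt key hp

lemma ac_add {a b : ℕ → ℝ} {r s : ℝ} (ha : AlmostConvergentTo a r)
    (hb : AlmostConvergentTo b s) : AlmostConvergentTo (a + b) (r + s) := by
  have := ha.add hb
  unfold AlmostConvergentTo at *
  convert this using 1
  · funext p n
    simp only [Pi.add_apply, Finset.sum_add_distrib, smul_add]
  · rfl


section main
variable {X : Type*} [NormedAddCommGroup X] [NormedSpace ℝ X]

/-- partial sums of the subseries given by `M`, against functional `f` -/
noncomputable def psum (x : ℕ → X) (M : Set ℕ) (f : X →L[ℝ] ℝ) (n : ℕ) : ℝ :=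
  ∑ i ∈ Finset.range (n + 1), M.indicator (fun i => f (x i)) i

variable {x : ℕ → X}

lemma wuc (h : ∀ M : Set ℕ, ∃ y : X, ∀ f : X →L[ℝ] ℝ,
      AlmostConvergentTo (psum x M f) (f y)) (f : X →L[ℝ] ℝ) :
    Summable fun i => |f (x i)| := by
  classical
  have key : ∀ g : X →L[ℝ] ℝ,
      Summable fun i => ({i | 0 ≤ g (x i)}).indicator (fun i => g (x i)) i := by
    intro g
    set M := {i | 0 ≤ g (x i)} with hM
    obtain ⟨y, hy⟩ := h M
    have hac := hy g
    set b : ℕ → ℝ := psum x M g with hb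
    have hnn : ∀ i, 0 ≤ M.indicator (fun i => g (x i)) i := fun i =>
      Set.indicator_apply_nonneg (fun hi => hi)
    have hmono : Monotone b := monotone_nat_of_le_succ (fun n => by
      have : b (n+1) = b n + M.indicator (fun i => g (x i)) (n+1) := by
        simp [hb, psum, Finset.sum_range_succ]
      rw [this]
      linarith [hnn (n+1)])
    have hbd := ac_mono_bound hac hmono
    apply summable_of_sum_range_le hnn (c := g y + 1)
    intro n
    calc ∑ i ∈ Finset.range n, M.indicator (fun i => g (x i)) i
        ≤ b n := by
          apply Finset.sum_le_sum_of_subset_of_nonneg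
          · exact Finset.range_subset_range.2 (Nat.le_succ n)
          · intro i _ _; exact hnn i
      _ ≤ g y + 1 := hbd n
  have h1 := key f
  have h2 := key (-f)
  have heq : (fun i => |f (x i)|) = fun i =>
      ({i | 0 ≤ f (x i)}).indicator (fun i => f (x i)) i
      + ({i | 0 ≤ (-f) (x i)}).indicator (fun i => (-f) (x i)) i := by
    funext i
    simp only [ContinuousLinearMap.neg_apply, Set.indicator_apply, Set.mem_setOf_eq]
    rcases lt_trichotomy (f (x i)) 0 with hlt | heq0 | hgt
    · rw [if_neg (by linarith), if_pos (by linarith), abs_of_neg hlt]; ring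
    · simp [heq0]
    · rw [if_pos (by linarith), if_neg (by linarith), abs_of_pos hgt]; ring
  rw [heq]
  exact h1.add h2

/-- tail sums -/
noncomputable def tailT (x : ℕ → X) (f : X →L[ℝ] ℝ) (N : ℕ) : ℝ :=
  ∑' k, |f (x (k + N))|

lemma tailT_summable (h : ∀ M : Set ℕ, ∃ y : X, ∀ f : X →L[ℝ] ℝ,
      AlmostConvergentTo (psum x M f) (f y)) (f : X →L[ℝ] ℝ) (N : ℕ) :
    Summable fun k => |f (x (k + N))| := by
  have := wuc h f
  exact (summable_nat_add_iff (f := fun i => |f (x i)|) N).2 this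

lemma tailT_tendsto (h : ∀ M : Set ℕ, ∃ y : X, ∀ f : X →L[ℝ] ℝ,
      AlmostConvergentTo (psum x M f) (f y)) (f : X →L[ℝ] ℝ) :
    Tendsto (fun N => tailT x f N) atTop (𝓝 0) :=
  tendsto_sum_nat_add fun i => |f (x i)|

lemma psum_abs_le (h : ∀ M : Set ℕ, ∃ y : X, ∀ f : X →L[ℝ] ℝ,
      AlmostConvergentTo (psum x M f) (f y)) (f : X →L[ℝ] ℝ) {S : Set ℕ} {N : ℕ}
    (hS : ∀ i ∈ S, N ≤ i) (n : ℕ) : |psum x S f n| ≤ tailT x f N := by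
  classical
  rw [psum, Finset.sum_indicator_eq_sum_filter]
  set F := (Finset.range (n+1)).filter (fun i => i ∈ S) with hF
  have hFN : ∀ i ∈ F, N ≤ i := by
    intro i hi
    rw [hF, Finset.mem_filter] at hi
    exact hS i hi.2
  calc |∑ i ∈ F, f (x i)| ≤ ∑ i ∈ F, |f (x i)| := Finset.abs_sum_le_sum_abs _ _
    _ = ∑ j ∈ F.image (· - N), |f (x (j + N))| := by
        have hinj : ∀ u ∈ F, ∀ v ∈ F, u - N = v - N → u = v := by
          intro u hu v hv huv
          have := congrArg (· + N) huv
          simpa [Nat.sub_add_cancel (hFN u hu), Nat.sub_add_cancel (hFN v hv)] using this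
        symm
        rw [Finset.sum_image hinj]
        apply Finset.sum_congr rfl
        intro i hi
        rw [Nat.sub_add_cancel (hFN i hi)]
    _ ≤ tailT x f N := Summable.sum_le_tsum _ (fun j _ => abs_nonneg _) (tailT_summable h f N)


lemma psum_union {M M' : Set ℕ} (hd : Disjoint M M') (f : X →L[ℝ] ℝ) :
    psum x (M ∪ M') f = psum x M f + psum x M' f := by
  funext n
  simp only [psum, Pi.add_apply]
  rw [← Finset.sum_add_distrib]
  apply Finset.sum_congr rfl
  intro i _
  rw [Set.indicator_union_of_disjoint hd]

lemma scalar_add {M M' : Set ℕ} {yU yM yM' : X} (hd : Disjoint M M')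
    (hU : ∀ f : X →L[ℝ] ℝ, AlmostConvergentTo (psum x (M ∪ M') f) (f yU))
    (h1 : ∀ f : X →L[ℝ] ℝ, AlmostConvergentTo (psum x M f) (f yM))
    (h2 : ∀ f : X →L[ℝ] ℝ, AlmostConvergentTo (psum x M' f) (f yM'))
    (f : X →L[ℝ] ℝ) : f yU = f yM + f yM' := by
  have h3 := ac_add (h1 f) (h2 f)
  rw [← psum_union hd f] at h3
  exact ac_unique (hU f) h3

lemma scalar_finset {t : Finset ℕ} {y : X}
    (hy : ∀ f : X →L[ℝ] ℝ, AlmostConvergentTo (psum x ↑t f) (f y))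
    (f : X →L[ℝ] ℝ) : f y = ∑ i ∈ t, f (x i) := by
  classical
  apply ac_unique (hy f)
  apply ac_eventually_const (N := t.sup id)
  intro n hn
  rw [psum, Finset.sum_indicator_eq_sum_filter]
  apply Finset.sum_congr _ (fun _ _ => rfl)
  ext i
  simp only [Finset.mem_filter, Finset.mem_range, Finset.mem_coe]
  constructor
  · rintro ⟨_, hi⟩; exact hi
  · intro hi
    refine ⟨?_, hi⟩
    have : id i ≤ t.sup id := Finset.le_sup hi
    simp only [id] at this
    omega

lemma finsum_le_tail (h : ∀ M : Set ℕ, ∃ y : X, ∀ f : X →L[ℝ] ℝ,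
      AlmostConvergentTo (psum x M f) (f y))
    (f : X →L[ℝ] ℝ) {t : Finset ℕ} {N : ℕ} (ht : ∀ i ∈ t, N ≤ i) :
    ∑ i ∈ t, |f (x i)| ≤ tailT x f N := by
  classical
  calc ∑ i ∈ t, |f (x i)| = ∑ j ∈ t.image (· - N), |f (x (j + N))| := by
        have hinj : ∀ u ∈ t, ∀ v ∈ t, u - N = v - N → u = v := by
          intro u hu v hv huv
          have := congrArg (· + N) huv
          simpa [Nat.sub_add_cancel (ht u hu), Nat.sub_add_cancel (ht v hv)] using this
        symm
        rw [Finset.sum_image hinj]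
        exact Finset.sum_congr rfl fun i hi => by rw [Nat.sub_add_cancel (ht i hi)]
    _ ≤ tailT x f N := Summable.sum_le_tsum _ (fun j _ => abs_nonneg _) (tailT_summable h f N)

lemma apply_blocksum_le (h : ∀ M : Set ℕ, ∃ y : X, ∀ f : X →L[ℝ] ℝ,
      AlmostConvergentTo (psum x M f) (f y))
    (f : X →L[ℝ] ℝ) {t : Finset ℕ} {N : ℕ} (ht : ∀ i ∈ t, N ≤ i) :
    |f (∑ i ∈ t, x i)| ≤ tailT x f N := by
  rw [map_sum]
  exact le_trans (Finset.abs_sum_le_sum_abs _ _) (finsum_le_tail h f ht)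

lemma rows_summable (h : ∀ M : Set ℕ, ∃ y : X, ∀ f : X →L[ℝ] ℝ,
      AlmostConvergentTo (psum x M f) (f y))
    (f : X →L[ℝ] ℝ) {F : ℕ → Finset ℕ} (hdisj : ∀ j j', j ≠ j' → Disjoint (F j) (F j')) :
    Summable (fun j => ∑ i ∈ F j, |f (x i)|) := by
  classical
  apply summable_of_sum_range_le (c := ∑' i, |f (x i)|)
    (fun j => Finset.sum_nonneg fun _ _ => abs_nonneg _)
  intro J
  rw [← Finset.sum_biUnion]
  · exact Summable.sum_le_tsum _ (fun i _ => abs_nonneg _) (wuc h f)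
  · intro a _ b _ hab
    exact hdisj a b hab

end main
end OPaux

open OPaux in
/-- Almost convergence Orlicz–Pettis theorem: if every subseries of `∑ xᵢ` in a real
Banach space is weakly almost summable, then `∑ xᵢ` is unconditionally convergent. -/
theorem stmt19 (X : Type*) [NormedAddCommGroup X] [NormedSpace ℝ X] [CompleteSpace X]
    (x : ℕ → X)
    (h : ∀ M : Set ℕ, ∃ y : X, ∀ f : X →L[ℝ] ℝ,
      AlmostConvergentTo
        (fun n => ∑ i ∈ Finset.range (n + 1), M.indicator (fun i => f (x i)) i) (f y)) :
    Summable x := by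
  classical
  by_contra hns
  have hh : ∀ M : Set ℕ, ∃ y : X, ∀ f : X →L[ℝ] ℝ,
      AlmostConvergentTo (psum x M f) (f y) := fun M => h M
  choose Y hY using hh
  have hh : ∀ M : Set ℕ, ∃ y : X, ∀ f : X →L[ℝ] ℝ,
      AlmostConvergentTo (psum x M f) (f y) := fun M => ⟨Y M, hY M⟩
  -- extract disjoint blocks with norms ≥ ε
  have hnc : ¬ CauchySeq (fun s : Finset ℕ => ∑ i ∈ s, x i) := fun hc =>
    hns (summable_iff_cauchySeq_finset.2 hc)
  rw [cauchySeq_finset_iff_vanishing_norm] at hnc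
  push_neg at hnc
  obtain ⟨ε, hε, hblocks⟩ := hnc
  choose T hTdisj hTnorm using hblocks
  set Nf : ℕ → ℕ := fun j => Nat.rec 0
    (fun _ Nj => max (Nj + 1) ((T (Finset.range Nj)).sup id + 1)) j with hNf
  set F : ℕ → Finset ℕ := fun j => T (Finset.range (Nf j)) with hF
  have hNfsucc : ∀ j, Nf (j+1) = max (Nf j + 1) ((F j).sup id + 1) := fun j => rfl
  have hNlt : ∀ j, Nf j < Nf (j+1) := fun j => by
    rw [hNfsucc]
    exact lt_of_lt_of_le (Nat.lt_succ_self _) (le_max_left _ _)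
  have hNmono : StrictMono Nf := strictMono_nat_of_lt_succ hNlt
  have hFlow : ∀ j, ∀ i ∈ F j, Nf j ≤ i := by
    intro j i hi
    by_contra hlt
    push_neg at hlt
    exact (Finset.disjoint_left.1 (hTdisj (Finset.range (Nf j)))) hi (Finset.mem_range.2 hlt)
  have hFhigh : ∀ j, ∀ i ∈ F j, i < Nf (j+1) := by
    intro j i hi
    have h1 : id i ≤ (F j).sup id := Finset.le_sup hi
    rw [hNfsucc]
    simp only [id] at h1
    have h2 := le_max_right (Nf j + 1) ((F j).sup id + 1)
    omega
  have hFdisj : ∀ j j', j ≠ j' → Disjoint (F j) (F j') := by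
    have key : ∀ j j', j < j' → Disjoint (F j) (F j') := by
      intro j j' hjj'
      rw [Finset.disjoint_left]
      intro i hi hi'
      have h1 := hFhigh j i hi
      have h2 := hFlow j' i hi'
      have h3 : Nf (j+1) ≤ Nf j' := hNmono.monotone hjj'
      omega
    intro j j' hne
    rcases lt_or_gt_of_ne hne with hlt | hgt
    · exact key _ _ hlt
    · exact (key _ _ hgt).symm
  set y : ℕ → X := fun j => ∑ i ∈ F j, x i with hy
  have hynorm : ∀ j, ε ≤ ‖y j‖ := fun j => hTnorm _
  have hyne : ∀ j, y j ≠ 0 := by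
    intro j h0
    have := hynorm j
    rw [h0, norm_zero] at this
    linarith
  choose fb hfbnorm hfbval using fun j => exists_dual_vector ℝ (y j) (norm_ne_zero_iff.2 (hyne j))
  have hfbval' : ∀ j, fb j (y j) = ‖y j‖ := fun j => by simpa using hfbval j
  -- the closed span V
  set V := (Submodule.span ℝ (Set.range x)).topologicalClosure with hV
  have hVC : IsClosed (V : Set X) := Submodule.isClosed_topologicalClosure _
  have hxV : ∀ i, x i ∈ V := fun i =>
    Submodule.le_topologicalClosure _ (Submodule.subset_span ⟨i, rfl⟩)
  have hyV : ∀ j, y j ∈ V := fun j => Submodule.sum_mem _ (fun i _ => hxV i)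
  have hsep : TopologicalSpace.IsSeparable (V : Set X) := by
    rw [hV, Submodule.topologicalClosure_coe]
    exact ((Set.countable_range x).isSeparable.span).closure
  obtain ⟨D, hDc, hDsub⟩ := hsep
  have hDne : D.Nonempty := by
    rcases Set.eq_empty_or_nonempty D with hDe | hne
    · exfalso
      have h0 : (0 : X) ∈ V := V.zero_mem
      have := hDsub h0
      rw [hDe, closure_empty] at this
      exact this
    · exact hne
  obtain ⟨e, hDe⟩ := Set.Countable.exists_eq_range hDc hDne
  -- sequential compactness: extract pointwise convergent subsequence on D
  have humem : ∀ j, (fun m => fb j (e m)) ∈ Set.univ.pi (fun m => Set.Icc (-‖e m‖) ‖e m‖) := by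
    intro j m _
    have h1 : |fb j (e m)| ≤ ‖e m‖ := by
      calc |fb j (e m)| = ‖fb j (e m)‖ := (Real.norm_eq_abs _).symm
        _ ≤ ‖fb j‖ * ‖e m‖ := (fb j).le_opNorm _
        _ = ‖e m‖ := by rw [hfbnorm j, one_mul]
    exact Set.mem_Icc.2 (abs_le.1 h1)
  have hKcomp : IsSeqCompact (Set.univ.pi fun m : ℕ => Set.Icc (-‖e m‖) ‖e m‖) :=
    (isCompact_univ_pi fun m => isCompact_Icc).isSeqCompact
  obtain ⟨L, _, φ, hφmono, hφtend⟩ := hKcomp (fun j => humem j)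
  have hptconv : ∀ m, Tendsto (fun kk => fb (φ kk) (e m)) atTop (𝓝 (L m)) := by
    intro m
    exact (tendsto_pi_nhds.1 hφtend) m
  -- ultrafilter refining the subsequence
  have hmapne : (Filter.map φ atTop).NeBot := Filter.map_neBot
  set U : Ultrafilter ℕ := Ultrafilter.of (Filter.map φ atTop) with hUdef
  have hUle : (U : Filter ℕ) ≤ Filter.map φ atTop := Ultrafilter.of_le _
  -- the limit functional along U
  have hΦex : ∀ v : X, ∃ r ∈ Set.Icc (-‖v‖) ‖v‖, Tendsto (fun j => fb j v) (U : Filter ℕ) (𝓝 r) := by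
    intro v
    have hmem : ∀ j, fb j v ∈ Set.Icc (-‖v‖) ‖v‖ := by
      intro j
      have h1 : |fb j v| ≤ ‖v‖ := by
        calc |fb j v| = ‖fb j v‖ := (Real.norm_eq_abs _).symm
          _ ≤ ‖fb j‖ * ‖v‖ := (fb j).le_opNorm _
          _ = ‖v‖ := by rw [hfbnorm j, one_mul]
      exact Set.mem_Icc.2 (abs_le.1 h1)
    have hle : (U.map fun j => fb j v : Filter ℝ) ≤ Filter.principal (Set.Icc (-‖v‖) ‖v‖) := by
      rw [Ultrafilter.coe_map, Filter.le_principal_iff, Filter.mem_map]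
      exact Filter.univ_mem' hmem
    obtain ⟨r, hrmem, hrle⟩ := isCompact_Icc.ultrafilter_le_nhds (U.map fun j => fb j v) hle
    refine ⟨r, hrmem, ?_⟩
    rwa [Filter.Tendsto, ← Ultrafilter.coe_map]
  choose Φ hΦmem hΦtend using hΦex
  have hΦadd : ∀ v w, Φ (v + w) = Φ v + Φ w := by
    intro v w
    have h1 : Tendsto (fun j => fb j (v + w)) (U : Filter ℕ) (𝓝 (Φ v + Φ w)) := by
      have := (hΦtend v).add (hΦtend w)
      simpa [map_add] using this
    exact tendsto_nhds_unique (hΦtend (v + w)) h1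
  have hΦsmul : ∀ (c : ℝ) (v : X), Φ (c • v) = c * Φ v := by
    intro c v
    have h1 : Tendsto (fun j => fb j (c • v)) (U : Filter ℕ) (𝓝 (c * Φ v)) := by
      have := (hΦtend v).const_mul c
      simpa [map_smul, smul_eq_mul] using this
    exact tendsto_nhds_unique (hΦtend (c • v)) h1
  have hΦbound : ∀ v, |Φ v| ≤ ‖v‖ := fun v =>
    abs_le.2 ⟨(hΦmem v).1, (hΦmem v).2⟩
  set Flin : X →ₗ[ℝ] ℝ :=
    { toFun := Φ, map_add' := hΦadd, map_smul' := hΦsmul } with hFlin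
  set Fc : X →L[ℝ] ℝ := LinearMap.mkContinuous Flin 1
    (fun v => by rw [one_mul, Real.norm_eq_abs]; exact hΦbound v) with hFcdef
  have hFcapp : ∀ v, Fc v = Φ v := fun v => rfl
  set g : ℕ → X →L[ℝ] ℝ := fun j => fb j - Fc with hgdef
  have hgapp : ∀ j v, g j v = fb j v - Φ v := fun j v => rfl
  have hgbound : ∀ j (v : X), |g j v| ≤ 2 * ‖v‖ := by
    intro j v
    rw [hgapp]
    have h1 : |fb j v| ≤ ‖v‖ := by
      calc |fb j v| = ‖fb j v‖ := (Real.norm_eq_abs _).symm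
        _ ≤ ‖fb j‖ * ‖v‖ := (fb j).le_opNorm _
        _ = ‖v‖ := by rw [hfbnorm j, one_mul]
    have h2 := hΦbound v
    have := abs_sub (fb j v) (Φ v)
    calc |fb j v - Φ v| ≤ |fb j v| + |Φ v| := abs_sub _ _
      _ ≤ 2 * ‖v‖ := by linarith
  -- (G1): along the subsequence, g tends to 0 pointwise on V
  have hG1 : ∀ v ∈ (V : Set X), Tendsto (fun kk => g (φ kk) v) atTop (𝓝 0) := by
    have hForE : ∀ m, Tendsto (fun kk => g (φ kk) (e m)) atTop (𝓝 0) := by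
      intro m
      have h1 : Tendsto (fun j => fb j (e m)) (U : Filter ℕ) (𝓝 (L m)) := by
        have h2 : Tendsto (fun j => fb j (e m)) (Filter.map φ atTop) (𝓝 (L m)) := by
          rw [Filter.tendsto_map'_iff]
          exact hptconv m
        exact h2.mono_left hUle
      have hLm : Φ (e m) = L m := tendsto_nhds_unique (hΦtend (e m)) h1
      have h3 := (hptconv m).sub_const (L m)
      rw [← hLm] at h3
      simpa [hgapp, sub_self] using h3
    intro v hv
    rw [Metric.tendsto_atTop]
    intro δ hδ
    have hvD : v ∈ closure D := hDsub hv
    obtain ⟨d, hdD, hdist⟩ := Metric.mem_closure_iff.1 hvD (δ/4) (by linarith)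
    rw [hDe] at hdD
    obtain ⟨m, rfl⟩ := hdD
    obtain ⟨K, hK⟩ := (Metric.tendsto_atTop.1 (hForE m)) (δ/4) (by linarith)
    refine ⟨K, fun kk hkk => ?_⟩
    have h1 := hK kk hkk
    rw [Real.dist_eq, sub_zero] at h1 ⊢
    have hsplit : g (φ kk) v = g (φ kk) (v - e m) + g (φ kk) (e m) := by
      rw [map_sub]; ring
    have hnormdist : ‖v - e m‖ = dist v (e m) := (dist_eq_norm _ _).symm
    calc |g (φ kk) v| ≤ |g (φ kk) (v - e m)| + |g (φ kk) (e m)| := by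
          rw [hsplit]; exact abs_add_le _ _
      _ < 2 * (δ/4) + δ/4 := by
          apply add_lt_add_of_le_of_lt
          · calc |g (φ kk) (v - e m)| ≤ 2 * ‖v - e m‖ := hgbound _ _
              _ ≤ 2 * (δ/4) := by rw [hnormdist]; linarith
          · exact h1
      _ < δ := by linarith
  -- abs bound for Y
  have hYabs : ∀ (S : Set ℕ) (N : ℕ), (∀ i ∈ S, N ≤ i) →
      ∀ f0 : X →L[ℝ] ℝ, |f0 (Y S)| ≤ tailT x f0 N :=
    fun S N hSN f0 => ac_abs_le (hY S f0) (psum_abs_le hh f0 hSN)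
  -- Y S lies in V
  have hYV : ∀ S : Set ℕ, Y S ∈ (V : Set X) := by
    intro S
    by_contra hnot
    obtain ⟨f0, u, hfu, hufY⟩ :=
      geometric_hahn_banach_closed_point (V.convex) hVC hnot
    have hu0 : 0 < u := by
      have := hfu 0 V.zero_mem
      simpa using this
    have hf0x : ∀ i, f0 (x i) = 0 := by
      intro i
      by_contra hne
      have hmem : ((u+1) / f0 (x i)) • x i ∈ (V : Set X) :=
        V.smul_mem _ (hxV i)
      have h2 := hfu _ hmem
      rw [map_smul, smul_eq_mul, div_mul_cancel₀ _ hne] at h2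
      linarith
    have h1 := hYabs S 0 (fun i _ => Nat.zero_le i) f0
    have h2 : tailT x f0 0 = 0 := by
      rw [tailT]
      convert tsum_zero with k
      rw [hf0x]
      simp
    rw [h2] at h1
    have h3 : f0 (Y S) = 0 := abs_eq_zero.1 (le_antisymm h1 (abs_nonneg _))
    rw [h3] at hufY
    linarith
  -- countable additivity along any strictly monotone block selection
  have hCA : ∀ (c : ℕ → ℕ), StrictMono c → ∀ f0 : X →L[ℝ] ℝ,
      HasSum (fun l => f0 (y (c l))) (f0 (Y (⋃ l, ↑(F (c l))))) := by
    intro c hc f0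
    have hsum1 : Summable (fun l => f0 (y (c l))) := by
      apply Summable.of_abs
      apply Summable.of_nonneg_of_le (fun l => abs_nonneg _) (fun l => ?_)
        ((rows_summable hh f0 hFdisj).comp_injective hc.injective)
      calc |f0 (y (c l))| = |∑ i' ∈ F (c l), f0 (x i')| := by rw [hy, ← map_sum]
        _ ≤ ∑ i' ∈ F (c l), |f0 (x i')| := Finset.abs_sum_le_sum_abs _ _
    have hpartial : ∀ K : ℕ, f0 (Y (⋃ l, ↑(F (c l)))) =
        (∑ l ∈ Finset.range K, f0 (y (c l))) + f0 (Y (⋃ l, ↑(F (c (l + K))))) := by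
      intro K
      set Sfin : Finset ℕ := (Finset.range K).biUnion (fun l => F (c l)) with hSfin
      set Stail : Set ℕ := ⋃ l, ↑(F (c (l + K))) with hStail
      have hsplit : (⋃ l, ↑(F (c l)) : Set ℕ) = ↑Sfin ∪ Stail := by
        ext i
        simp only [hSfin, hStail, Set.mem_iUnion, Set.mem_union, Finset.coe_biUnion,
          Finset.mem_coe, Finset.mem_biUnion, Finset.mem_range, Set.mem_setOf_eq]
        constructor
        · rintro ⟨l, hl⟩
          rcases lt_or_ge l K with hlt | hge
          · exact Or.inl ⟨l, hlt, hl⟩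
          · exact Or.inr ⟨l - K, by rwa [Nat.sub_add_cancel hge]⟩
        · rintro (⟨l, _, hl⟩ | ⟨l, hl⟩)
          · exact ⟨l, hl⟩
          · exact ⟨l + K, hl⟩
      have hdisj2 : Disjoint (↑Sfin : Set ℕ) Stail := by
        rw [Set.disjoint_left]
        intro i hi hi'
        simp only [hSfin, Finset.coe_biUnion, Set.mem_iUnion, Finset.mem_coe,
          Finset.mem_biUnion, Finset.mem_range] at hi
        simp only [hStail, Set.mem_iUnion, Finset.mem_coe] at hi'
        obtain ⟨l, hlK, hl⟩ := hi
        obtain ⟨l', hl'⟩ := hi'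
        have hne : c l ≠ c (l' + K) := by
          intro hEq
          have := hc.injective hEq
          omega
        exact Finset.disjoint_left.1 (hFdisj _ _ hne) hl hl'
      have hadd := scalar_add (x := x) hdisj2
        (fun f1 => by rw [← hsplit]; exact hY _ f1)
        (hY (↑Sfin)) (hY Stail) f0
      rw [hadd]
      congr 1
      rw [scalar_finset (x := x) (hY (↑Sfin)) f0]
      rw [Finset.sum_biUnion (fun a _ b _ hab => hFdisj _ _ (fun hEq => hab (hc.injective hEq)))]
      apply Finset.sum_congr rfl
      intro l _
      rw [hy, map_sum]
    have htail0 : Tendsto (fun K => f0 (Y (⋃ l, ↑(F (c (l + K)))))) atTop (𝓝 0) := by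
      refine squeeze_zero_norm (fun K => ?_)
        ((tailT_tendsto hh f0).comp ((hNmono.comp hc).tendsto_atTop))
      · rw [Real.norm_eq_abs]
        apply hYabs _ _ _ f0
        intro i hi
        simp only [Set.mem_iUnion, Finset.mem_coe] at hi
        obtain ⟨l, hl⟩ := hi
        calc Nf (c K) ≤ Nf (c (l + K)) := hNmono.monotone (hc.monotone (Nat.le_add_left K l))
          _ ≤ i := hFlow _ _ hl
    have hps : Tendsto (fun K => ∑ l ∈ Finset.range K, f0 (y (c l))) atTop
        (𝓝 (f0 (Y (⋃ l, ↑(F (c l)))))) := by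
      have heq : (fun K => ∑ l ∈ Finset.range K, f0 (y (c l)))
          = fun K => f0 (Y (⋃ l, ↑(F (c l)))) - f0 (Y (⋃ l, ↑(F (c (l + K))))) := by
        funext K
        have := hpartial K
        linarith
      rw [heq]
      simpa using tendsto_const_nhds.sub htail0
    have h2 := hsum1.hasSum.tendsto_sum_nat
    have h3 : ∑' l, f0 (y (c l)) = f0 (Y (⋃ l, ↑(F (c l)))) :=
      tendsto_nhds_unique h2 hps
    exact h3 ▸ hsum1.hasSum
  -- diagonal is eventually big
  have hFcy : Tendsto (fun j => Fc (y j)) atTop (𝓝 0) := by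
    refine squeeze_zero_norm (fun j => ?_) ((tailT_tendsto hh Fc).comp hNmono.tendsto_atTop)
    rw [Real.norm_eq_abs, hy]
    exact apply_blocksum_le hh Fc (hFlow j)
  obtain ⟨I₀, hI₀⟩ : ∃ I₀, ∀ j, I₀ ≤ j → ε/2 ≤ g j (y j) := by
    obtain ⟨I₀, hI⟩ := Metric.tendsto_atTop.1 hFcy (ε/2) (by linarith)
    refine ⟨I₀, fun j hj => ?_⟩
    have h1 := hI j hj
    rw [Real.dist_eq, sub_zero] at h1
    have habs := abs_lt.1 h1
    have h2 : g j (y j) = fb j (y j) - Fc (y j) := rfl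
    rw [h2, hfbval' j]
    have h3 := hynorm j
    have h4 : Fc (y j) = Φ (y j) := rfl
    linarith [habs.2]
  -- rows are absolutely summable
  have hrowsum : ∀ i0 : ℕ, Summable (fun j => |g i0 (y j)|) := by
    intro i0
    apply Summable.of_nonneg_of_le (fun j => abs_nonneg _) (fun j => ?_)
      (rows_summable hh (g i0) hFdisj)
    calc |g i0 (y j)| = |∑ i' ∈ F j, g i0 (x i')| := by rw [hy, ← map_sum]
      _ ≤ ∑ i' ∈ F j, |g i0 (x i')| := Finset.abs_sum_le_sum_abs _ _
  have hε8 : 0 < ε/8 := by linarith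
  -- choosers for the gliding hump
  have hchoose1 : ∀ b lb : ℕ, ∃ kk, lb ≤ kk ∧
      ∑ j ∈ Finset.range b, |g (φ kk) (y j)| < ε/8 := by
    intro b lb
    have htend : Tendsto (fun kk => ∑ j ∈ Finset.range b, |g (φ kk) (y j)|) atTop (𝓝 0) := by
      have h0 : ∀ j ∈ Finset.range b, Tendsto (fun kk => |g (φ kk) (y j)|) atTop (𝓝 0) := by
        intro j _
        simpa using (hG1 (y j) (hyV j)).abs
      simpa using tendsto_finset_sum (Finset.range b) h0
    have h1 : ∀ᶠ kk in atTop, ∑ j ∈ Finset.range b, |g (φ kk) (y j)| < ε/8 :=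
      htend.eventually (gt_mem_nhds hε8)
    obtain ⟨kk, hkk1, hkk2⟩ := (h1.and (eventually_ge_atTop lb)).exists
    exact ⟨kk, hkk2, hkk1⟩
  have hchoose2 : ∀ i0 : ℕ, ∃ R : ℕ, ∑' j, |g i0 (y (j + R))| < ε/8 := by
    intro i0
    have := tendsto_sum_nat_add (fun j => |g i0 (y j)|)
    exact (this.eventually (gt_mem_nhds hε8)).exists
  choose st1 hst1a hst1b using hchoose1
  choose st2 hst2 using hchoose2
  -- the recursive hump construction
  set σ : ℕ → ℕ × ℕ := fun m => Nat.rec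
      (st1 0 I₀, st2 (φ (st1 0 I₀)))
      (fun _ p =>
        (st1 (φ p.1 + 1) (max (p.1 + 1) (max p.2 I₀)),
         max p.2 (st2 (φ (st1 (φ p.1 + 1) (max (p.1 + 1) (max p.2 I₀))))))) m with hσ
  set k : ℕ → ℕ := fun m => (σ m).1 with hkdef
  set ρ : ℕ → ℕ := fun m => (σ m).2 with hρdef
  have hk0 : k 0 = st1 0 I₀ := rfl
  have hρ0 : ρ 0 = st2 (φ (k 0)) := rfl
  have hksucc : ∀ m, k (m+1) = st1 (φ (k m) + 1) (max (k m + 1) (max (ρ m) I₀)) := fun m => rfl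
  have hρsucc : ∀ m, ρ (m+1) = max (ρ m) (st2 (φ (k (m+1)))) := fun m => rfl
  have hkI₀ : ∀ m, I₀ ≤ k m := by
    intro m
    cases m with
    | zero => rw [hk0]; exact hst1a 0 I₀
    | succ m =>
      rw [hksucc]
      calc I₀ ≤ max (k m + 1) (max (ρ m) I₀) := le_trans (le_max_right _ _) (le_max_right _ _)
        _ ≤ _ := hst1a _ _
  have hkmono : StrictMono k := by
    apply strictMono_nat_of_lt_succ
    intro m
    rw [hksucc]
    calc k m < k m + 1 := Nat.lt_succ_self _
      _ ≤ max (k m + 1) (max (ρ m) I₀) := le_max_left _ _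
      _ ≤ _ := hst1a _ _
  have hkρ : ∀ m, ρ m ≤ k (m+1) := by
    intro m
    rw [hksucc]
    calc ρ m ≤ max (k m + 1) (max (ρ m) I₀) :=
          le_trans (le_max_left _ _) (le_max_right _ _)
      _ ≤ _ := hst1a _ _
  have hρmono : Monotone ρ := by
    apply monotone_nat_of_le_succ
    intro m
    rw [hρsucc]
    exact le_max_left _ _
  have hρtail : ∀ m, st2 (φ (k m)) ≤ ρ m := by
    intro m
    cases m with
    | zero => rw [hρ0]
    | succ m => rw [hρsucc]; exact le_max_right _ _
  have hcol : ∀ m, ∑ j ∈ Finset.range (φ (k m) + 1), |g (φ (k (m+1))) (y j)| < ε/8 := by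
    intro m
    rw [hksucc]
    exact hst1b _ _
  set iSeq : ℕ → ℕ := fun m => φ (k m) with hiSeq
  have himono : StrictMono iSeq := hφmono.comp hkmono
  -- the chosen subseries
  set S : Set ℕ := ⋃ l, ↑(F (iSeq l)) with hSdef
  -- row lower bound
  have hrow : ∀ m : ℕ, ε/4 < |g (iSeq (m+1)) (Y S)| := by
    intro m
    set f0 : X →L[ℝ] ℝ := g (iSeq (m+1)) with hf0
    have hHS := hCA iSeq himono f0
    have hsummable : Summable (fun l => f0 (y (iSeq l))) := hHS.summable
    have htsum : f0 (Y S) = ∑' l, f0 (y (iSeq l)) := hHS.tsum_eq.symm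
    -- split at m+2
    have hsplit := Summable.sum_add_tsum_nat_add (f := fun l => f0 (y (iSeq l))) (m+2) hsummable
    -- head: range (m+2) = range (m+1) + last
    have hhead : ∑ l ∈ Finset.range (m+2), f0 (y (iSeq l))
        = ∑ l ∈ Finset.range (m+1), f0 (y (iSeq l)) + f0 (y (iSeq (m+1))) :=
      Finset.sum_range_succ _ _
    -- small previous columns
    have hprev : |∑ l ∈ Finset.range (m+1), f0 (y (iSeq l))| < ε/8 := by
      have hb : ∑ l ∈ Finset.range (m+1), |f0 (y (iSeq l))|
          ≤ ∑ j ∈ Finset.range (φ (k m) + 1), |f0 (y j)| := by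
        have hinj : ∀ u ∈ Finset.range (m+1), ∀ v ∈ Finset.range (m+1),
            iSeq u = iSeq v → u = v := fun u _ v _ huv => himono.injective huv
        calc ∑ l ∈ Finset.range (m+1), |f0 (y (iSeq l))|
            = ∑ j ∈ (Finset.range (m+1)).image iSeq, |f0 (y j)| := by
              symm; rw [Finset.sum_image hinj]
          _ ≤ ∑ j ∈ Finset.range (φ (k m) + 1), |f0 (y j)| := by
              apply Finset.sum_le_sum_of_subset_of_nonneg
              · intro j hj
                simp only [Finset.mem_image, Finset.mem_range] at hj ⊢
                obtain ⟨l, hl, rfl⟩ := hj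
                have h5 : iSeq l ≤ iSeq m := himono.monotone (Nat.lt_succ_iff.1 hl)
                have h6 : iSeq m = φ (k m) := rfl
                omega
              · intro j _ _
                exact abs_nonneg _
      have hc1 := hcol m
      calc |∑ l ∈ Finset.range (m+1), f0 (y (iSeq l))|
          ≤ ∑ l ∈ Finset.range (m+1), |f0 (y (iSeq l))| := Finset.abs_sum_le_sum_abs _ _
        _ ≤ ∑ j ∈ Finset.range (φ (k m) + 1), |f0 (y j)| := hb
        _ < ε/8 := by rw [hf0, hiSeq]; exact hc1
    -- small tail
    set R : ℕ := st2 (iSeq (m+1)) with hR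
    have hRle : ∀ l, R ≤ iSeq (l + (m+2)) := by
      intro l
      have h1 : st2 (φ (k (m+1))) ≤ ρ (m+1) := hρtail (m+1)
      have h2 : ρ (m+1) ≤ k (m+2) := hkρ (m+1)
      have h3 : k (m+2) ≤ k (l + (m+2)) := hkmono.monotone (Nat.le_add_left (m+2) l)
      have h4 : k (l + (m+2)) ≤ φ (k (l + (m+2))) := hφmono.le_apply
      have h5 : R = st2 (φ (k (m+1))) := rfl
      have h6 : iSeq (l + (m+2)) = φ (k (l + (m+2))) := rfl
      omega
    have htailbnd : |∑' l, f0 (y (iSeq (l + (m+2))))| < ε/8 := by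
      have habs : Summable (fun l => |f0 (y (iSeq (l + (m+2))))|) := by
        have := (hrowsum (iSeq (m+1))).comp_injective
          (i := fun l => iSeq (l + (m+2))) (fun u v huv => by
            have h3 : iSeq (u + (m+2)) = iSeq (v + (m+2)) := huv
            have := himono.injective (a₁ := u + (m+2)) (a₂ := v + (m+2)) h3
            omega)
        exact this
      have h1 : |∑' l, f0 (y (iSeq (l + (m+2))))| ≤ ∑' l, |f0 (y (iSeq (l + (m+2))))| := by
        rw [← Real.norm_eq_abs]
        refine (norm_tsum_le_tsum_norm ?_).trans_eq ?_
        · simpa [Real.norm_eq_abs] using habs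
        · simp [Real.norm_eq_abs]
      have h2 : ∑' l, |f0 (y (iSeq (l + (m+2))))| ≤ ∑' j, |f0 (y (j + R))| := by
        apply Summable.tsum_le_tsum_of_inj (fun l => iSeq (l + (m+2)) - R)
        · intro u v huv
          have huv' : iSeq (u + (m+2)) - R = iSeq (v + (m+2)) - R := huv
          have hu := hRle u
          have hv := hRle v
          have h3 : iSeq (u + (m+2)) = iSeq (v + (m+2)) := by omega
          have := himono.injective (a₁ := u + (m+2)) (a₂ := v + (m+2)) h3
          omega
        · intro c _
          exact abs_nonneg _
        · intro l
          rw [Nat.sub_add_cancel (hRle l)]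
        · exact habs
        · exact (summable_nat_add_iff R).2 (hrowsum (iSeq (m+1)))
      have h3 : ∑' j, |f0 (y (j + R))| < ε/8 := by
        rw [hf0, hR]
        exact hst2 _
      linarith
    -- the diagonal term
    have hdiag : ε/2 ≤ f0 (y (iSeq (m+1))) := by
      rw [hf0]
      apply hI₀
      calc I₀ ≤ k (m+1) := hkI₀ (m+1)
        _ ≤ φ (k (m+1)) := hφmono.le_apply
    -- combine
    have hcomb : f0 (Y S) = (∑ l ∈ Finset.range (m+1), f0 (y (iSeq l))
        + f0 (y (iSeq (m+1)))) + ∑' l, f0 (y (iSeq (l + (m+2)))) := by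
      rw [htsum, ← hsplit, hhead]
    have habs1 := abs_lt.1 hprev
    have habs2 := abs_lt.1 htailbnd
    have : ε/4 < f0 (Y S) := by
      rw [hcomb]
      linarith
    calc ε/4 < f0 (Y S) := this
      _ ≤ |f0 (Y S)| := le_abs_self _
  -- final contradiction
  have hYSV : Y S ∈ (V : Set X) := hYV S
  obtain ⟨K, hK⟩ := Metric.tendsto_atTop.1 (hG1 (Y S) hYSV) (ε/4) (by linarith)
  have hkK : K ≤ k (K+1) := le_trans (Nat.le_succ K) (hkmono.le_apply)
  have h1 := hK (k (K+1)) hkK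
  rw [Real.dist_eq, sub_zero] at h1
  have h2 := hrow K
  rw [hiSeq] at h2
  linarith
end
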